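/- arXiv:1208.2639 — 6 statements merged into one kernel-verified Lean document; each statement's English description precedes it below -/
import Mathlib

section
/- Let G be a topological group and γ : ℝ → G a continuous curve with γ(0) = 1. Define γₙ(t) := γ(t/n)ⁿ. Assume there exists ε > 0 such that the sequence of restrictions γₙ|[−ε,ε] converges uniformly (in the sense of right translates of identity neighborhoods) to some limit curve. Then the sequence γₙ converges uniformly on every compact subset of ℝ. -/
open Set Filter Topology

section helpers
variable {G : Type*} [Group G] [TopologicalSpace G] [IsTopologicalGroup G]

/-- conjugation bound over a compact set -/
theorem conj_nhds_of_compact {C : Set G} (hC : IsCompact C) {U : Set G} (hU : U ∈ 𝓝 (1 : G)) :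
    ∃ V ∈ 𝓝 (1 : G), ∀ x ∈ C, ∀ v ∈ V, x⁻¹ * v * x ∈ U := by
  have hφ : Continuous fun p : G × G => p.1⁻¹ * p.2 * p.1 := by continuity
  have key : ∀ x ∈ C, ∃ W ∈ 𝓝 x, ∃ V ∈ 𝓝 (1:G), ∀ y ∈ W, ∀ v ∈ V, y⁻¹ * v * y ∈ U := by
    intro x hx
    have h1 : ContinuousAt (fun p : G × G => p.1⁻¹ * p.2 * p.1) (x, 1) := hφ.continuousAt
    have h2 : (fun p : G × G => p.1⁻¹ * p.2 * p.1) (x, 1) = 1 := by simp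
    have h3 : (fun p : G × G => p.1⁻¹ * p.2 * p.1) ⁻¹' U ∈ 𝓝 (x, (1:G)) := by
      apply h1; rw [h2]; exact hU
    rw [mem_nhds_prod_iff] at h3
    obtain ⟨W, hW, V, hV, hWV⟩ := h3
    exact ⟨W, hW, V, hV, fun y hy v hv => hWV (Set.mk_mem_prod hy hv)⟩
  choose W hW V hV hWV using key
  obtain ⟨t, ht⟩ := hC.elim_nhds_subcover' W hW
  refine ⟨⋂ x ∈ t, V x x.2, ?_, ?_⟩
  · exact (biInter_mem t.finite_toSet).2 fun x _ => hV x x.2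
  · intro x hx v hv
    obtain ⟨y, hy, hxy⟩ := Set.mem_iUnion₂.1 (ht hx)
    exact hWV y y.2 x hxy v (by simpa using Set.mem_iInter₂.1 hv y hy)

/-- uniform smallness of (f s)⁻¹ f s' on a compact interval -/
theorem unif_aux {f : ℝ → G} (hf : Continuous f) (c : ℝ) {U : Set G} (hU : U ∈ 𝓝 (1 : G)) :
    ∃ δ > 0, ∀ s ∈ Icc (-c) c, ∀ s' ∈ Icc (-c) c, |s - s'| < δ → (f s)⁻¹ * f s' ∈ U := by
  obtain ⟨Vo, hVoU, hVopen, hVo1⟩ := mem_nhds_iff.1 hU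
  set g : ℝ × ℝ → G := fun p => (f p.1)⁻¹ * f p.2 with hg
  have hgc : Continuous g := by fun_prop
  set K : Set (ℝ × ℝ) := Icc (-c) c ×ˢ Icc (-c) c with hK
  have hKc : IsCompact K := isCompact_Icc.prod isCompact_Icc
  set F : Set (ℝ × ℝ) := K \ g ⁻¹' Vo with hF
  have hFc : IsCompact F := hKc.diff (hVopen.preimage hgc)
  rcases F.eq_empty_or_nonempty with hFe | hFne
  · refine ⟨1, one_pos, fun s hs s' hs' _ => ?_⟩
    have hmem : (s, s') ∈ K := Set.mk_mem_prod hs hs'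
    have h2 : (s, s') ∈ g ⁻¹' Vo := by
      by_contra h
      have : (s, s') ∈ F := ⟨hmem, h⟩
      rw [hFe] at this; exact this
    exact hVoU h2
  · obtain ⟨p₀, hp₀, hmin⟩ := hFc.exists_isMinOn hFne
      ((continuous_fst.sub continuous_snd).abs.continuousOn)
    refine ⟨|p₀.1 - p₀.2|, ?_, ?_⟩
    · rcases lt_or_eq_of_le (abs_nonneg (p₀.1 - p₀.2)) with h | h
      · exact h
      · exfalso
        have heq : p₀.1 = p₀.2 := by
          have := abs_eq_zero.1 h.symm; linarith [sub_eq_zero.1 this]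
        have : g p₀ = 1 := by simp [hg, heq]
        exact hp₀.2 (by simp [this, hVo1])
    · intro s hs s' hs' hlt
      by_contra h
      have hmem : (s, s') ∈ F := ⟨Set.mk_mem_prod hs hs', fun hv => h (hVoU hv)⟩
      have := hmin hmem
      simp only [IsMinOn, IsMinFilter] at this
      exact absurd hlt (not_lt.2 this)

/-- symmetric neighborhood with triple products -/
theorem nhds_split3 {U : Set G} (hU : U ∈ 𝓝 (1:G)) :
    ∃ V ∈ 𝓝 (1:G), V⁻¹ = V ∧ ∀ a ∈ V, ∀ b ∈ V, ∀ c ∈ V, a * b * c ∈ U := by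
  obtain ⟨W₁, hW₁, hW₁s⟩ := exists_nhds_one_split hU
  obtain ⟨W₂, hW₂, hW₂s⟩ := exists_nhds_one_split hW₁
  set V₀ := W₁ ∩ W₂ with hV₀
  have hV₀n : V₀ ∈ 𝓝 (1:G) := Filter.inter_mem hW₁ hW₂
  refine ⟨V₀ ∩ V₀⁻¹, Filter.inter_mem hV₀n (inv_mem_nhds_one G hV₀n), ?_, ?_⟩
  · ext x; simp only [Set.mem_inter_iff, Set.mem_inv, inv_inv]; tauto
  · rintro a ⟨ha, -⟩ b ⟨hb, -⟩ c ⟨hc, -⟩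
    rw [mul_assoc]
    exact hW₁s a ha.1 (b*c) (hW₂s b hb.2 c hc.2)

variable (γ : ℝ → G)

/-- the convergence predicate -/
def Conv (θ : ℝ → G) (c : ℝ) : Prop :=
  ∀ U ∈ 𝓝 (1 : G), ∃ N : ℕ, ∀ n ≥ N, ∀ t ∈ Set.Icc (-c) c,
    (θ t)⁻¹ * (γ (t / n)) ^ n ∈ U

variable {γ}

theorem ucont_of_conv (hγ : Continuous γ) {θ : ℝ → G} {c : ℝ} (h : Conv γ θ c) :
    ∀ U ∈ 𝓝 (1:G), ∃ δ > 0, ∀ s ∈ Icc (-c) c, ∀ s' ∈ Icc (-c) c, |s - s'| < δ →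
      (θ s)⁻¹ * θ s' ∈ U := by
  intro U hU
  obtain ⟨V, hV, hVsym, hVs⟩ := nhds_split3 hU
  obtain ⟨N, hN⟩ := h V hV
  set f : ℝ → G := fun t => γ (t / N) ^ N with hf
  have hfc : Continuous f := (hγ.comp (continuous_id.div_const _)).pow N
  obtain ⟨δ, hδ, hδs⟩ := unif_aux hfc c hV
  refine ⟨δ, hδ, fun s hs s' hs' hd => ?_⟩
  have ha : (θ s)⁻¹ * f s ∈ V := hN N le_rfl s hs
  have ha' : (θ s')⁻¹ * f s' ∈ V := hN N le_rfl s' hs'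
  have ha'' : ((θ s')⁻¹ * f s')⁻¹ ∈ V := by rw [← hVsym]; exact Set.inv_mem_inv.2 ha'
  have hb : (f s)⁻¹ * f s' ∈ V := hδs s hs s' hs' hd
  have key : (θ s)⁻¹ * θ s' =
      ((θ s)⁻¹ * f s) * ((f s)⁻¹ * f s') * ((θ s')⁻¹ * f s')⁻¹ := by group
  rw [key]
  exact hVs _ ha _ hb _ ha''

theorem contOn_of_conv (hγ : Continuous γ) {θ : ℝ → G} {c : ℝ} (h : Conv γ θ c) :
    ContinuousOn θ (Icc (-c) c) := by
  intro x hx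
  rw [ContinuousWithinAt, ← map_mul_left_nhds_one (θ x)]
  intro S hS
  rw [Filter.mem_map] at hS ⊢
  obtain ⟨δ, hδ, hδs⟩ := ucont_of_conv hγ h _ hS
  have hball : Metric.ball x δ ∩ Icc (-c) c ∈ 𝓝[Icc (-c) c] x :=
    Filter.inter_mem (nhdsWithin_le_nhds (Metric.ball_mem_nhds x hδ)) self_mem_nhdsWithin
  filter_upwards [hball] with t ⟨htb, hti⟩
  have : (θ x)⁻¹ * θ t ∈ (θ x * ·) ⁻¹' S := by
    apply hδs x hx t hti
    rw [Metric.mem_ball, Real.dist_eq] at htb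
    rw [abs_sub_comm]; exact htb
  simpa using this

theorem lim_of_conv {θ : ℝ → G} {c : ℝ} (h : Conv γ θ c) {t : ℝ} (ht : t ∈ Icc (-c) c) :
    Tendsto (fun n : ℕ => (γ (t / n)) ^ n) atTop (𝓝 (θ t)) := by
  have h1 : Tendsto (fun n : ℕ => (θ t)⁻¹ * (γ (t / n)) ^ n) atTop (𝓝 1) := by
    rw [tendsto_atTop']
    intro U hU
    obtain ⟨N, hN⟩ := h U hU
    exact ⟨N, fun n hn => hN n hn t ht⟩
  have h2 := h1.const_mul (θ t)
  simpa using h2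

/-- the key doubling step -/
theorem step_of_conv (hγ : Continuous γ) (hγ0 : γ 0 = 1) {θ : ℝ → G} {c : ℝ} (hc : 0 < c)
    (h : Conv γ θ c) : Conv γ (fun t => θ (t / 2) ^ 2) (2 * c) := by
  intro U hU
  have hcont : ContinuousOn θ (Icc (-c) c) := contOn_of_conv hγ h
  have hCcomp : IsCompact (θ '' Icc (-c) c) := isCompact_Icc.image_of_continuousOn hcont
  obtain ⟨W₁, hW₁, -, hW₁s⟩ := nhds_split3 hU
  obtain ⟨V₂, hV₂, hconj₂⟩ := conj_nhds_of_compact hCcomp hW₁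
  obtain ⟨V₁, hV₁, hconj₁⟩ := conj_nhds_of_compact hCcomp hV₂
  set V := V₁ ∩ V₂ ∩ W₁ with hVdef
  have hV : V ∈ 𝓝 (1:G) := Filter.inter_mem (Filter.inter_mem hV₁ hV₂) hW₁
  obtain ⟨V', hV', hV's⟩ := exists_nhds_one_split hV
  have hV'1 : (1:G) ∈ V' := mem_of_mem_nhds hV'
  have hV'V : V' ⊆ V := fun v hv => by simpa using hV's v hv 1 hV'1
  obtain ⟨δ, hδ, hθu⟩ := ucont_of_conv hγ h V' hV'
  -- continuity of γ at 0
  have hγ0V : γ ⁻¹' V ∈ 𝓝 (0:ℝ) := by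
    have hca := hγ.continuousAt (x := 0)
    rw [ContinuousAt, hγ0] at hca
    exact hca hV
  obtain ⟨δ₀, hδ₀, hball⟩ := Metric.mem_nhds_iff.1 hγ0V
  obtain ⟨N₀, hN₀⟩ := h V' hV'
  set M : ℕ := max N₀ (max (⌈2*c/δ₀⌉₊ + 1) (⌈c/δ⌉₊ + 1)) with hMdef
  refine ⟨2*M+1, ?_⟩
  intro n hn t ht
  have hs : t/2 ∈ Icc (-c) c := by
    constructor
    · have := ht.1; linarith
    · have := ht.2; linarith
  have hθsC : θ (t/2) ∈ θ '' Icc (-c) c := Set.mem_image_of_mem θ hs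
  have hγsmall : ∀ x : ℝ, |x| < δ₀ → γ x ∈ V := by
    intro x hx
    apply hball
    rw [Metric.mem_ball, Real.dist_eq, sub_zero]; exact hx
  rcases Nat.even_or_odd n with ⟨m, hm⟩ | ⟨m, hm⟩
  · -- even case: n = m + m
    have hmM : M ≤ m := by omega
    have hmN₀ : N₀ ≤ m := le_trans (le_max_left _ _) hmM
    have hmne : (m:ℝ) ≠ 0 := by
      have : 1 ≤ m := by omega
      exact_mod_cast Nat.one_le_iff_ne_zero.1 this
    have harg : t / (n:ℝ) = (t/2) / m := by
      rw [hm, div_div]; push_cast; ring_nf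
    have hpow : γ ((t/2)/(m:ℝ)) ^ n = (γ ((t/2)/(m:ℝ)) ^ m) ^ 2 := by
      rw [← pow_mul]; congr 1; omega
    set a := (θ (t/2))⁻¹ * γ ((t/2)/(m:ℝ)) ^ m with hadef
    have ha' : a ∈ V' := hN₀ m hmN₀ (t/2) hs
    have haV : a ∈ V := hV'V ha'
    have hwrite : γ ((t/2)/(m:ℝ)) ^ m = θ (t/2) * a := by rw [hadef]; group
    have hiden : ((θ (t/2)) ^ 2)⁻¹ * (θ (t/2) * a) ^ 2 =
        ((θ (t/2))⁻¹ * a * θ (t/2)) * a * 1 := by rw [pow_two, pow_two]; group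
    show (θ (t/2) ^ 2)⁻¹ * γ (t / (n:ℝ)) ^ n ∈ U
    rw [harg, hpow, hwrite, hiden]
    exact hW₁s _ (hconj₂ _ hθsC a haV.1.2) _ haV.2 _ (mem_of_mem_nhds hW₁)
  · -- odd case: n = 2*m + 1
    have hmM : M ≤ m := by omega
    have hmN₀ : N₀ ≤ m := le_trans (le_max_left _ _) hmM
    have hm1 : (⌈2*c/δ₀⌉₊ + 1 : ℕ) ≤ m := le_trans (le_trans (le_max_left _ _) (le_max_right _ _)) hmM
    have hm2 : (⌈c/δ⌉₊ + 1 : ℕ) ≤ m := le_trans (le_trans (le_max_right _ _) (le_max_right _ _)) hmM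
    have hmne : (m:ℝ) ≠ 0 := by
      have : 1 ≤ m := by omega
      exact_mod_cast Nat.one_le_iff_ne_zero.1 this
    have hnreal : (n:ℝ) = 2*m+1 := by rw [hm]; push_cast; ring
    have hnpos : (0:ℝ) < 2*(m:ℝ)+1 := by positivity
    set u := t / (n:ℝ) with hudef
    have htabs : |t| ≤ 2*c := abs_le.2 ⟨by linarith [ht.1], ht.2⟩
    have huabs : |u| ≤ 2*c / (2*(m:ℝ)+1) := by
      rw [hudef, hnreal, abs_div, abs_of_pos hnpos]
      gcongr
    have h2c : 2*c/δ₀ < 2*(m:ℝ)+1 := by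
      have h1 : 2*c/δ₀ ≤ (⌈2*c/δ₀⌉₊ : ℝ) := Nat.le_ceil _
      have h2 : (⌈2*c/δ₀⌉₊ : ℝ) + 1 ≤ (m:ℝ) := by exact_mod_cast hm1
      linarith
    have heV : γ u ∈ V := by
      apply hγsmall
      have h6 := (div_lt_iff₀ hδ₀).1 h2c
      exact lt_of_le_of_lt huabs ((div_lt_iff₀ hnpos).2 (by linarith))
    set sm := (m:ℝ) * u with hsmdef
    have hsmIcc : sm ∈ Icc (-c) c := by
      rw [mem_Icc, ← abs_le]
      have habs : |sm| = (m:ℝ) * |u| := by rw [hsmdef, abs_mul, Nat.abs_cast]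
      rw [habs]
      calc (m:ℝ) * |u| ≤ (m:ℝ) * (2*c/(2*(m:ℝ)+1)) := by
            gcongr
        _ ≤ c := by
            rw [mul_div_assoc', div_le_iff₀ hnpos]
            nlinarith [hc.le, Nat.cast_nonneg (α := ℝ) m]
    have hsmm : sm / (m:ℝ) = u := by rw [hsmdef]; exact mul_div_cancel_left₀ u hmne
    have ha : (θ sm)⁻¹ * γ u ^ m ∈ V' := by
      have h7 := hN₀ m hmN₀ sm hsmIcc
      rwa [hsmm] at h7
    have hsdiff : |t/2 - sm| < δ := by
      have heq : t/2 - sm = t / (2*(2*(m:ℝ)+1)) := by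
        rw [hsmdef, hudef, hnreal]; field_simp; ring
      rw [heq, abs_div, abs_of_pos (by positivity : (0:ℝ) < 2*(2*(m:ℝ)+1))]
      have h4 : c / δ < 2*(m:ℝ)+1 := by
        have h1 := Nat.le_ceil (c/δ)
        have h2 : (⌈c/δ⌉₊:ℝ) + 1 ≤ (m:ℝ) := by exact_mod_cast hm2
        linarith
      have h5 : c < δ*(2*(m:ℝ)+1) := by
        rw [div_lt_iff₀ hδ] at h4; linarith
      calc |t| / (2*(2*(m:ℝ)+1)) ≤ (2*c) / (2*(2*(m:ℝ)+1)) := by gcongr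
        _ < δ := by rw [div_lt_iff₀ (by positivity)]; nlinarith
    have hb : (θ (t/2))⁻¹ * θ sm ∈ V' := hθu (t/2) hs sm hsmIcc hsdiff
    set d := ((θ (t/2))⁻¹ * θ sm) * ((θ sm)⁻¹ * γ u ^ m) with hddef
    have hdV : d ∈ V := hV's _ hb _ ha
    have hwrite : γ u ^ m = θ (t/2) * d := by rw [hddef]; group
    have hpow : γ u ^ n = γ u * (γ u ^ m)^2 := by
      rw [hm, show 2*m+1 = m*2+1 by ring, pow_succ', pow_mul]
    have hiden : (θ (t/2) ^ 2)⁻¹ * (γ u * (θ (t/2) * d)^2) =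
        ((θ (t/2))⁻¹ * ((θ (t/2))⁻¹ * γ u * θ (t/2)) * θ (t/2)) *
          ((θ (t/2))⁻¹ * d * θ (t/2)) * d := by
      rw [pow_two, pow_two]; group
    show (θ (t/2) ^ 2)⁻¹ * γ (t/(n:ℝ)) ^ n ∈ U
    rw [← hudef, hpow, hwrite, hiden]
    refine hW₁s _ ?_ _ (hconj₂ _ hθsC d hdV.1.2) _ hdV.2
    exact hconj₂ _ hθsC _ (hconj₁ _ hθsC _ heV.1.1)

theorem conv_pow (hγ : Continuous γ) (hγ0 : γ 0 = 1) {η : ℝ → G} {ε : ℝ} (hε : 0 < ε)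
    (h : Conv γ η ε) (k : ℕ) :
    Conv γ (fun t => η (t / 2^k) ^ 2^k) (2^k * ε) := by
  induction k with
  | zero =>
    intro U hU
    obtain ⟨N, hN⟩ := h U hU
    exact ⟨N, by simpa using hN⟩
  | succ k ih =>
    have hck : (0:ℝ) < 2^k * ε := by positivity
    have hstep := step_of_conv hγ hγ0 hck ih
    intro U hU
    obtain ⟨N, hN⟩ := hstep U hU
    refine ⟨N, fun n hn t ht => ?_⟩
    have ht' : t ∈ Icc (-(2*(2^k*ε))) (2*(2^k*ε)) := by
      have he : (2:ℝ)^(k+1)*ε = 2*(2^k*ε) := by ring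
      rwa [he] at ht
    have h9 := hN n hn t ht'
    simp only at h9
    have harg : t/2/(2:ℝ)^k = t/2^(k+1) := by
      rw [div_div]; congr 1; ring
    have hval : (η (t/2/(2:ℝ)^k) ^ (2:ℕ)^k) ^ 2 = η (t/2^(k+1)) ^ 2^(k+1) := by
      rw [harg, ← pow_mul]
      congr 1
    show (η (t/2^(k+1)) ^ (2:ℕ)^(k+1))⁻¹ * γ (t/(n:ℝ)) ^ n ∈ U
    rw [← hval]
    exact h9

theorem consist_succ [T2Space G] (hγ : Continuous γ) (hγ0 : γ 0 = 1) {η : ℝ → G} {ε : ℝ}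
    (hε : 0 < ε) (h : Conv γ η ε) (k : ℕ) {t : ℝ} (ht : |t| ≤ 2^k * ε) :
    η (t/2^(k+1)) ^ (2:ℕ)^(k+1) = η (t/2^k) ^ (2:ℕ)^k := by
  have ht1 : t ∈ Icc (-(2^k*ε)) (2^k*ε) := by
    rw [mem_Icc, ← abs_le]; exact ht
  have ht2 : t ∈ Icc (-(2^(k+1)*ε)) (2^(k+1)*ε) := by
    rw [mem_Icc, ← abs_le]
    refine le_trans ht ?_
    have : (2:ℝ)^k ≤ 2^(k+1) := by
      apply pow_le_pow_right₀ (by norm_num); omega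
    nlinarith
  have h1 := lim_of_conv (conv_pow hγ hγ0 hε h k) ht1
  have h2 := lim_of_conv (conv_pow hγ hγ0 hε h (k+1)) ht2
  exact tendsto_nhds_unique h2 h1

theorem consist_le [T2Space G] (hγ : Continuous γ) (hγ0 : γ 0 = 1) {η : ℝ → G} {ε : ℝ}
    (hε : 0 < ε) (h : Conv γ η ε) {j k : ℕ} (hjk : j ≤ k) {t : ℝ} (ht : |t| ≤ 2^j * ε) :
    η (t/2^k) ^ (2:ℕ)^k = η (t/2^j) ^ (2:ℕ)^j := by
  induction k, hjk using Nat.le_induction with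
  | base => rfl
  | succ k hjk ih =>
    have htk : |t| ≤ 2^k * ε := by
      refine le_trans ht ?_
      have : (2:ℝ)^j ≤ 2^k := by
        apply pow_le_pow_right₀ (by norm_num) hjk
      nlinarith
    rw [consist_succ hγ hγ0 hε h k htk]
    exact ih

end helpers


/-- **Lemma 3.2 (bootstrap).** Let `G` be a topological group and `γ : ℝ → G` a
continuous curve with `γ 0 = 1`. Set `γₙ(t) := γ(t/n)ⁿ`. If there exists `ε > 0` such
that `γₙ` restricted to `[-ε, ε]` converges uniformly (in the sense of right translates
of identity neighborhoods) to some limit curve, then `(γₙ)` converges uniformly on every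
compact subset of `ℝ`. -/
theorem bootstrap_uniform_convergence
    {G : Type*} [Group G] [TopologicalSpace G] [IsTopologicalGroup G] [T2Space G]
    (γ : ℝ → G) (hγ : Continuous γ) (hγ0 : γ 0 = 1)
    (ε : ℝ) (hε : 0 < ε) (η : ℝ → G)
    (hconv : ∀ U ∈ 𝓝 (1 : G), ∃ N : ℕ, ∀ n ≥ N, ∀ t ∈ Set.Icc (-ε) ε,
      (η t)⁻¹ * (γ (t / n)) ^ n ∈ U) :
    ∃ η' : ℝ → G, ∀ K : Set ℝ, IsCompact K →
      ∀ U ∈ 𝓝 (1 : G), ∃ N : ℕ, ∀ n ≥ N, ∀ t ∈ K, (η' t)⁻¹ * (γ (t / n)) ^ n ∈ U := by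
  have hC : Conv γ η ε := hconv
  have hex : ∀ t : ℝ, ∃ k : ℕ, |t| ≤ 2^k * ε := by
    intro t
    obtain ⟨k, hk⟩ := pow_unbounded_of_one_lt (|t|/ε) one_lt_two
    refine ⟨k, ?_⟩
    rw [div_lt_iff₀ hε] at hk
    linarith
  refine ⟨fun t => η (t / 2 ^ Nat.find (hex t)) ^ (2:ℕ) ^ Nat.find (hex t), ?_⟩
  intro K hK U hU
  obtain ⟨r, hr⟩ := hK.isBounded.subset_closedBall 0
  obtain ⟨k, hk⟩ := pow_unbounded_of_one_lt (|r|/ε) one_lt_two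
  have hrk : |r| ≤ 2^k * ε := by
    rw [div_lt_iff₀ hε] at hk
    linarith
  obtain ⟨N, hN⟩ := conv_pow hγ hγ0 hε hC k U hU
  refine ⟨N, fun n hn t htK => ?_⟩
  have htr : |t| ≤ |r| := by
    have h1 := hr htK
    rw [Metric.mem_closedBall, Real.dist_eq, sub_zero] at h1
    exact le_trans h1 (le_abs_self r)
  have ht2k : |t| ≤ 2^k * ε := le_trans htr hrk
  have hfind : |t| ≤ 2^(Nat.find (hex t)) * ε := Nat.find_spec (hex t)
  have hle : Nat.find (hex t) ≤ k := Nat.find_min' (hex t) ht2k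
  have heq := consist_le hγ hγ0 hε hC hle hfind
  show (η (t / 2 ^ Nat.find (hex t)) ^ (2:ℕ) ^ Nat.find (hex t))⁻¹ * γ (t/(n:ℝ)) ^ n ∈ U
  rw [← heq]
  exact hN n hn t (by rw [mem_Icc, ← abs_le]; exact ht2k)
end

section
/- Let G be a topological group, V a locally convex space, φ : G → V continuous, and X ∈ Hom(ℝ, G) a continuous one-parameter group such that the n-th directional derivative D_X^n φ (defined by (D_Xφ)(g) = lim_{t→0}(φ(gX(t)) − φ(g))/t, iterated n times) exists and is continuous. Then for every g ∈ G and t ∈ ℝ, φ(gX(t)) = Σ_{j=0}^n (t^j/j!)(D_X^j φ)(g) + t^n χ(g,t), where χ : G × ℝ → V is continuous with χ(g,0) = 0 for all g. -/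
open Set Filter Topology

open Pointwise
set_option maxRecDepth 4000

section Aux
set_option linter.unusedSectionVars false
variable {V : Type*} [AddCommGroup V] [Module ℝ V] [TopologicalSpace V]
  [IsTopologicalAddGroup V] [ContinuousSMul ℝ V]

/-- Derivative of a curve in a topological vector space. -/
abbrev HDc (f : ℝ → V) (v : V) (s : ℝ) : Prop :=
  Tendsto (fun h : ℝ => h⁻¹ • (f (s + h) - f s)) (𝓝[≠] (0:ℝ)) (𝓝 v)

theorem HDc.add {f g : ℝ → V} {v w : V} {s : ℝ} (hf : HDc f v s) (hg : HDc g w s) :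
    HDc (fun x => f x + g x) (v + w) s := by
  refine (Filter.Tendsto.add hf hg).congr fun h => ?_
  simp only [smul_sub, smul_add]
  abel

theorem HDc.finsetSum {ι : Type*} (t : Finset ι) {f : ι → ℝ → V} {v : ι → V} {x : ℝ}
    (h : ∀ i ∈ t, HDc (f i) (v i) x) :
    HDc (fun y => ∑ i ∈ t, f i y) (∑ i ∈ t, v i) x := by
  refine (tendsto_finset_sum t (fun i hi => h i hi)).congr fun h => ?_
  rw [← Finset.sum_sub_distrib, Finset.smul_sum]

theorem tendsto_add_punctured (s : ℝ) : Tendsto (fun h : ℝ => s + h) (𝓝[≠] (0:ℝ)) (𝓝 s) := by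
  have h0 : Tendsto (fun h : ℝ => s + h) (𝓝 (0:ℝ)) (𝓝 s) := by
    simpa using (continuous_add_left s).tendsto (0:ℝ)
  exact h0.mono_left nhdsWithin_le_nhds

theorem HDc.smulc {a : ℝ → ℝ} {a' : ℝ} {f : ℝ → V} {v : V} {s : ℝ}
    (ha : HasDerivAt a a' s) (hf : HDc f v s) (hc : ContinuousAt f s) :
    HDc (fun x => a x • f x) (a' • f s + a s • v) s := by
  have h1 : Tendsto (fun h : ℝ => h⁻¹ * (a (s + h) - a s)) (𝓝[≠] (0:ℝ)) (𝓝 a') := by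
    simpa [smul_eq_mul] using ha.tendsto_slope_zero
  have h2 : Tendsto (fun h : ℝ => f (s + h)) (𝓝[≠] (0:ℝ)) (𝓝 (f s)) :=
    hc.tendsto.comp (tendsto_add_punctured s)
  refine ((h1.smul h2).add (tendsto_const_nhds.smul hf)).congr fun h => ?_
  show _ = h⁻¹ • (a (s + h) • f (s + h) - a s • f s)
  simp only [smul_sub, sub_smul, smul_smul, sub_mul, mul_sub, mul_comm (a s) h⁻¹]
  abel

theorem HDc.const (c : V) (s : ℝ) : HDc (fun _ => c) 0 s := by
  have : (fun h : ℝ => h⁻¹ • ((fun _ : ℝ => c) (s + h) - c)) = fun _ => (0:V) := by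
    funext h; simp
  rw [HDc, this]
  exact tendsto_const_nhds

theorem HDc.clm (ℓ : V →L[ℝ] ℝ) {f : ℝ → V} {v : V} {s : ℝ} (hf : HDc f v s) :
    HasDerivAt (fun x => ℓ (f x)) (ℓ v) s := by
  rw [hasDerivAt_iff_tendsto_slope_zero]
  refine ((ℓ.continuous.tendsto v).comp hf).congr fun h => ?_
  simp [smul_eq_mul]

theorem mvt_convex {K : Set V} (hKconv : Convex ℝ K) (hKcl : IsClosed K)
    [LocallyConvexSpace ℝ V]
    {f : ℝ → V} {f' : ℝ → V} {a b : ℝ} (hab : a < b)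
    (hf : ∀ s, HDc f (f' s) s) (hfc : Continuous f)
    (hK : ∀ s ∈ Set.Icc a b, f' s ∈ K) : f b - f a ∈ (b - a) • K := by
  by_contra hmem
  have hba : (0:ℝ) < b - a := sub_pos.2 hab
  obtain ⟨ℓ, u, hlt, hgt⟩ := geometric_hahn_banach_closed_point
    (hKconv.smul (b - a)) (hKcl.smul_of_ne_zero hba.ne') hmem
  obtain ⟨c, hc, hceq⟩ := exists_hasDerivAt_eq_slope (fun x => ℓ (f x)) (fun s => ℓ (f' s)) hab
    ((ℓ.continuous.comp hfc).continuousOn) (fun x _ => HDc.clm ℓ (hf x))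
  have hKc : ℓ (f' c) < u / (b - a) := by
    have h1 := hlt _ (Set.smul_mem_smul_set (hK c (Set.Ioo_subset_Icc_self hc)))
    rw [map_smul, smul_eq_mul] at h1
    rw [lt_div_iff₀ hba]
    linarith [h1]
  rw [hceq] at hKc
  have h2 : ℓ (f b) - ℓ (f a) < u := (div_lt_div_iff_of_pos_right hba).1 hKc
  rw [← map_sub] at h2
  exact absurd h2 (not_lt.2 hgt.le)

end Aux
theorem fact_ratio (c : ℝ) {m : ℕ} (hm : 1 ≤ m) :
    (-((m : ℝ) * c ^ (m - 1)) / (Nat.factorial m : ℝ))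
      = -(c ^ (m - 1) / (Nat.factorial (m - 1) : ℝ)) := by
  have h1 : (Nat.factorial m : ℝ) = (m : ℝ) * (Nat.factorial (m - 1) : ℝ) := by
    rw [← Nat.mul_factorial_pred (by omega)]; push_cast; ring
  have hm0 : (m : ℝ) ≠ 0 := Nat.cast_ne_zero.2 (by omega)
  have hf0 : (Nat.factorial (m - 1) : ℝ) ≠ 0 := Nat.cast_ne_zero.2 (Nat.factorial_ne_zero _)
  rw [h1]
  field_simp

theorem telescope {V : Type*} [AddCommGroup V] [Module ℝ V] (c : ℝ) (w : ℕ → V) :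
    ∀ n : ℕ, 1 ≤ n →
      ∑ j ∈ Finset.range n,
        ((-((j : ℝ) * c ^ (j - 1)) / (Nat.factorial j : ℝ)) • w j
          + (c ^ j / (Nat.factorial j : ℝ)) • w (j + 1))
        = (c ^ (n - 1) / (Nat.factorial (n - 1) : ℝ)) • w n := by
  intro n hn
  induction n with
  | zero => omega
  | succ m ih =>
    rcases Nat.eq_zero_or_pos m with hm | hm
    · subst hm; simp
    · rw [Finset.sum_range_succ, ih hm, Nat.add_sub_cancel, fact_ratio c hm, neg_smul]
      abel

theorem keyF {G V : Type*} [Group G] [TopologicalSpace G] [IsTopologicalGroup G]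
    [AddCommGroup V] [Module ℝ V] [TopologicalSpace V] [IsTopologicalAddGroup V]
    [ContinuousSMul ℝ V]
    (X : ℝ → G) (hX0 : X 0 = 1) (hXadd : ∀ s t : ℝ, X (s + t) = X s * X t)
    (hXcont : Continuous X)
    (n : ℕ) (hn : 1 ≤ n) (D : ℕ → G → V)
    (hDcont : ∀ j ≤ n, Continuous (D j))
    (hDder : ∀ j < n, ∀ g : G,
      Tendsto (fun t : ℝ => t⁻¹ • (D j (g * X t) - D j g)) (𝓝[≠] (0 : ℝ))
        (𝓝 (D (j + 1) g)))
    (g : G) (t : ℝ) :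
    ∃ F : ℝ → V, Continuous F ∧
      (∀ s : ℝ, HDc F
        (((t - s) ^ (n - 1) / (Nat.factorial (n - 1) : ℝ)) • (D n (g * X s) - D n g)) s) ∧
      F t - F 0 = D 0 (g * X t)
        - ∑ j ∈ Finset.range (n + 1), (t ^ j / (Nat.factorial j : ℝ)) • D j g := by
  have haj : ∀ (j : ℕ) (s : ℝ), HasDerivAt (fun x : ℝ => (t - x) ^ j / (Nat.factorial j : ℝ))
      (-((j : ℝ) * (t - s) ^ (j - 1)) / (Nat.factorial j : ℝ)) s := by
    intro j s
    have h0 : HasDerivAt (fun x : ℝ => t - x) (-1) s := (hasDerivAt_id s).const_sub t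
    have h1 := (h0.pow j).div_const (Nat.factorial j : ℝ)
    exact h1.congr_deriv (by ring)
  refine ⟨fun s => (∑ j ∈ Finset.range n,
      ((t - s) ^ j / (Nat.factorial j : ℝ)) • D j (g * X s))
      + ((t - s) ^ n / (Nat.factorial n : ℝ)) • D n g, ?_, ?_, ?_⟩
  · apply Continuous.add
    · apply continuous_finset_sum
      intro j hj
      exact (((continuous_const.sub continuous_id).pow j).div_const _).smul
        ((hDcont j (Finset.mem_range.1 hj).le).comp (continuous_const.mul hXcont))
    · exact (((continuous_const.sub continuous_id).pow n).div_const _).smul continuous_const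
  · intro s
    have hterm : ∀ j ∈ Finset.range n,
        HDc (fun x => ((t - x) ^ j / (Nat.factorial j : ℝ)) • D j (g * X x))
          ((-((j : ℝ) * (t - s) ^ (j - 1)) / (Nat.factorial j : ℝ)) • D j (g * X s)
            + ((t - s) ^ j / (Nat.factorial j : ℝ)) • D (j + 1) (g * X s)) s := by
      intro j hj
      have hj' : j < n := Finset.mem_range.1 hj
      have hv : HDc (fun x => D j (g * X x)) (D (j + 1) (g * X s)) s := by
        refine (hDder j hj' (g * X s)).congr fun h => ?_
        simp only [hXadd, mul_assoc]
      exact HDc.smulc (haj j s) hv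
        (((hDcont j hj'.le).comp (continuous_const.mul hXcont)).continuousAt)
    have hsum := HDc.finsetSum (Finset.range n) hterm
    have hlast := HDc.smulc (V := V) (haj n s) (HDc.const (D n g) s) continuousAt_const
    have htot := hsum.add hlast
    have hval : (∑ j ∈ Finset.range n,
        ((-((j : ℝ) * (t - s) ^ (j - 1)) / (Nat.factorial j : ℝ)) • D j (g * X s)
          + ((t - s) ^ j / (Nat.factorial j : ℝ)) • D (j + 1) (g * X s)))
        + ((-((n : ℝ) * (t - s) ^ (n - 1)) / (Nat.factorial n : ℝ)) • D n g
          + ((t - s) ^ n / (Nat.factorial n : ℝ)) • (0 : V))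
        = ((t - s) ^ (n - 1) / (Nat.factorial (n - 1) : ℝ)) • (D n (g * X s) - D n g) := by
      rw [telescope (t - s) (fun j => D j (g * X s)) n hn, smul_zero, add_zero,
        fact_ratio (t - s) hn, neg_smul, smul_sub]
      abel
    exact hval ▸ htot
  · have h1 : (∑ j ∈ Finset.range n, ((0 : ℝ) ^ j / (Nat.factorial j : ℝ)) • D j (g * X t))
        = D 0 (g * X t) := by
      rw [Finset.sum_eq_single 0]
      · norm_num
      · intro b _ hb; rw [zero_pow hb]; simp
      · intro h0; exact absurd (Finset.mem_range.2 (by omega)) h0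
    have h2 : ((0 : ℝ) ^ n / (Nat.factorial n : ℝ)) • D n g = 0 := by
      rw [zero_pow (by omega : n ≠ 0)]; simp
    simp only [sub_self, sub_zero, hX0, mul_one]
    rw [h1, h2, add_zero, Finset.sum_range_succ]

/-- **Lemma 2.5(i) (Taylor formula with continuous remainder).**
Let `G` be a topological group, `V` a (Hausdorff) locally convex space, `φ : G → V`
continuous and `X : ℝ → G` a continuous one-parameter group such that the iterated
right derivatives `D_X^j φ` (here given by the family `D j`, with `D 0 = φ`) exist for
`j ≤ n` and are continuous.  Then for every `g ∈ G` and `t ∈ ℝ`,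
`φ(g X(t)) = ∑_{j=0}^n (tʲ/j!) (D_X^j φ)(g) + tⁿ χ(g,t)`,
where `χ : G × ℝ → V` is continuous with `χ(g,0) = 0` for all `g`. -/
theorem taylor_formula_one_parameter_group
    {G V : Type*} [Group G] [TopologicalSpace G] [IsTopologicalGroup G] [T2Space G]
    [AddCommGroup V] [Module ℝ V] [TopologicalSpace V] [IsTopologicalAddGroup V]
    [ContinuousSMul ℝ V] [LocallyConvexSpace ℝ V] [T2Space V]
    (φ : G → V) (hφ : Continuous φ)
    (X : ℝ → G) (hX0 : X 0 = 1) (hXadd : ∀ s t : ℝ, X (s + t) = X s * X t)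
    (hXcont : Continuous X)
    (n : ℕ) (hn : 1 ≤ n)
    (D : ℕ → G → V) (hD0 : D 0 = φ)
    (hDcont : ∀ j ≤ n, Continuous (D j))
    (hDder : ∀ j < n, ∀ g : G,
      Tendsto (fun t : ℝ => t⁻¹ • (D j (g * X t) - D j g)) (𝓝[≠] (0 : ℝ))
        (𝓝 (D (j + 1) g))) :
    ∃ χ : G × ℝ → V, Continuous χ ∧ (∀ g : G, χ (g, 0) = 0) ∧
      ∀ (g : G) (t : ℝ),
        φ (g * X t) =
          (∑ j ∈ Finset.range (n + 1), (t ^ j / (Nat.factorial j : ℝ)) • D j g)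
            + t ^ n • χ (g, t) := by
  subst hD0
  have hn0 : n ≠ 0 := by omega
  set S : G → ℝ → V := fun g t =>
    ∑ j ∈ Finset.range (n + 1), (t ^ j / (Nat.factorial j : ℝ)) • D j g with hS
  set χ : G × ℝ → V := fun p => (p.2 ^ n)⁻¹ • (D 0 (p.1 * X p.2) - S p.1 p.2) with hχ
  have hS0 : ∀ g, S g 0 = D 0 g := by
    intro g
    simp only [hS]
    rw [Finset.sum_eq_single 0]
    · norm_num
    · intro b _ hb; rw [zero_pow hb]; simp
    · intro h0; exact absurd (Finset.mem_range.2 (by omega)) h0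
  have hχ0 : ∀ g, χ (g, 0) = 0 := by
    intro g
    rw [hχ]
    simp [zero_pow hn0]
  have hgXc : Continuous fun p : G × ℝ => p.1 * X p.2 :=
    continuous_fst.mul (hXcont.comp continuous_snd)
  have hSc : Continuous fun p : G × ℝ => S p.1 p.2 := by
    apply continuous_finset_sum
    intro j hj
    exact (((continuous_pow j).comp continuous_snd).div_const _).smul
      ((hDcont j (Nat.lt_succ_iff.1 (Finset.mem_range.1 hj))).comp continuous_fst)
  have hnum : Continuous fun p : G × ℝ => D 0 (p.1 * X p.2) - S p.1 p.2 :=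
    ((hDcont 0 (by omega)).comp hgXc).sub hSc
  refine ⟨χ, ?_, hχ0, ?_⟩
  · -- Continuity of χ
    rw [continuous_iff_continuousAt]
    rintro ⟨g0, t0⟩
    by_cases ht0 : t0 = 0
    · subst ht0
      rw [ContinuousAt, hχ0 g0]
      intro W hW
      obtain ⟨W₁, hW₁n, hW₁c, hW₁sub⟩ := exists_mem_nhds_isClosed_subset hW
      obtain ⟨W₂, ⟨hW₂n, hW₂bal, hW₂conv⟩, hW₂sub⟩ :=
        (nhds_hasBasis_absConvex ℝ V).mem_iff.1 hW₁n
      set W₀ := closure W₂ with hW₀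
      have hW₀n : W₀ ∈ 𝓝 (0 : V) := mem_of_superset hW₂n subset_closure
      have hW₀cl : IsClosed W₀ := isClosed_closure
      have hW₀bal : Balanced ℝ W₀ := hW₂bal.closure
      have hW₀conv : Convex ℝ W₀ := hW₂conv.closure
      have hW₀W : W₀ ⊆ W := (closure_minimal hW₂sub hW₁c).trans hW₁sub
      have hψ : Continuous fun p : G × ℝ => D n (p.1 * X p.2) - D n p.1 :=
        ((hDcont n le_rfl).comp hgXc).sub ((hDcont n le_rfl).comp continuous_fst)
      have hpre : (fun p : G × ℝ => D n (p.1 * X p.2) - D n p.1) ⁻¹' W₀ ∈ 𝓝 (g0, (0 : ℝ)) := by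
        apply hψ.continuousAt.preimage_mem_nhds
        simpa [hX0] using hW₀n
      obtain ⟨U, hU, T, hT, hUT⟩ := mem_nhds_prod_iff.1 hpre
      obtain ⟨δ, hδpos, hδ⟩ := Metric.mem_nhds_iff.1 hT
      rw [Filter.mem_map]
      refine mem_of_superset (prod_mem_nhds hU (Metric.ball_mem_nhds (0 : ℝ) hδpos)) ?_
      rintro ⟨g, t⟩ ⟨hgU, htb⟩
      simp only [Set.mem_preimage]
      refine hW₀W ?_
      by_cases ht : t = 0
      · subst ht
        rw [hχ0 g]
        exact mem_of_mem_nhds hW₀n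
      · have htlt : |t| < δ := by
          simpa [Real.dist_eq] using htb
        have hmemW₀ : ∀ s : ℝ, |s| ≤ |t| → D n (g * X s) - D n g ∈ W₀ := by
          intro s hs
          have hsball : s ∈ Metric.ball (0:ℝ) δ := by
            simp only [Metric.mem_ball, Real.dist_eq, sub_zero]
            exact lt_of_le_of_lt hs htlt
          have := hUT (Set.mk_mem_prod hgU (hδ hsball))
          simpa using this
        obtain ⟨F, hFc, hFd, hFt⟩ := keyF X hX0 hXadd hXcont n hn D hDcont hDder g t
        set r := |t| ^ (n - 1) / (Nat.factorial (n - 1) : ℝ) with hr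
        have hrpos : 0 < r :=
          div_pos (pow_pos (abs_pos.2 ht) _) (by exact_mod_cast Nat.factorial_pos _)
        set K := r • W₀ with hK
        have hKconv : Convex ℝ K := hW₀conv.smul r
        have hKcl : IsClosed K := hW₀cl.smul_of_ne_zero hrpos.ne'
        have hF'K : ∀ s : ℝ, |s| ≤ |t| → |t - s| ≤ |t| →
            ((t - s) ^ (n - 1) / (Nat.factorial (n - 1) : ℝ)) • (D n (g * X s) - D n g) ∈ K := by
          intro s hs1 hs2
          have hz := hmemW₀ s hs1
          set ρ := (t - s) ^ (n - 1) / |t| ^ (n - 1) with hρ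
          have habs : |t| ^ (n - 1) ≠ 0 := pow_ne_zero _ (abs_ne_zero.2 ht)
          have hρle : ‖ρ‖ ≤ 1 := by
            rw [Real.norm_eq_abs, hρ, abs_div, abs_pow, abs_pow, abs_abs]
            rw [div_le_one (lt_of_le_of_ne (le_of_lt (pow_pos (abs_pos.2 ht) _)) (Ne.symm habs))]
            exact pow_le_pow_left₀ (abs_nonneg _) hs2 _
          have heq : ((t - s) ^ (n - 1) / (Nat.factorial (n - 1) : ℝ)) = r * ρ := by
            rw [hr, hρ]
            field_simp
          rw [heq, mul_smul]
          exact Set.smul_mem_smul_set (hW₀bal ρ hρle (Set.smul_mem_smul_set hz))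
        have key : F t - F 0 ∈ t • K := by
          rcases lt_or_gt_of_ne ht with hlt | hgt
          · have hm := mvt_convex hKconv hKcl hlt hFd hFc (fun s hs => by
              refine hF'K s ?_ ?_
              · rw [abs_of_nonpos hs.2, abs_of_neg hlt]
                linarith [hs.1]
              · rw [abs_of_nonpos (by linarith [hs.1] : t - s ≤ 0), abs_of_neg hlt]
                linarith [hs.2])
            obtain ⟨y, hy, hyeq⟩ := Set.mem_smul_set.1 hm
            refine Set.mem_smul_set.2 ⟨y, hy, ?_⟩
            rw [zero_sub, neg_smul] at hyeq
            rw [← neg_neg (t • y), hyeq, neg_sub]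
          · have hm := mvt_convex hKconv hKcl hgt hFd hFc (fun s hs => by
              refine hF'K s ?_ ?_
              · rw [abs_of_nonneg hs.1, abs_of_pos hgt]; exact hs.2
              · rw [abs_of_nonneg (by linarith [hs.2] : (0:ℝ) ≤ t - s), abs_of_pos hgt]
                linarith [hs.1])
            obtain ⟨y, hy, hyeq⟩ := Set.mem_smul_set.1 hm
            rw [sub_zero] at hyeq
            exact Set.mem_smul_set.2 ⟨y, hy, hyeq⟩
        obtain ⟨y, hyK, hty⟩ := Set.mem_smul_set.1 key
        obtain ⟨z, hz, hzy⟩ := Set.mem_smul_set.1 hyK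
        have hval2 : D 0 (g * X t) - S g t = t • (r • z) := by
          rw [hzy, hty, hFt]
        have hχval : χ (g, t) = ((t ^ n)⁻¹ * (t * r)) • z := by
          simp only [hχ]
          rw [hval2, smul_smul, smul_smul, mul_assoc]
        have hnorm : ‖(t ^ n)⁻¹ * (t * r)‖ ≤ 1 := by
          rw [Real.norm_eq_abs, abs_mul, abs_mul, abs_inv, abs_pow, hr, abs_div, abs_pow,
            abs_abs, Nat.abs_cast]
          have hpow : |t| * |t| ^ (n - 1) = |t| ^ n := by
            rw [← pow_succ']
            congr 1
            omega
          have htn : |t| ^ n ≠ 0 := pow_ne_zero _ (abs_ne_zero.2 ht)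
          rw [← mul_div_assoc, hpow, div_eq_mul_inv, ← mul_assoc, inv_mul_cancel₀ htn, one_mul]
          exact inv_le_one_of_one_le₀ (Nat.one_le_cast.2 (Nat.factorial_pos _))
        rw [hχval]
        exact hW₀bal _ hnorm (Set.smul_mem_smul_set hz)
    · simp only [hχ]
      apply ContinuousAt.smul
      · exact (((continuous_pow n).comp continuous_snd).continuousAt).inv₀
          (pow_ne_zero n ht0)
      · exact hnum.continuousAt
  · intro g t
    by_cases ht : t = 0
    · subst ht
      rw [hχ0, smul_zero, add_zero, hX0, mul_one]
      exact (hS0 g).symm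
    · show D 0 (g * X t) = S g t + t ^ n • χ (g, t)
      simp only [hχ]
      rw [smul_inv_smul₀ (pow_ne_zero n ht), add_sub_cancel]
end

section
/- Let G be a topological group, V a locally convex space, φ : G → V continuous, and X₁, X₂ ∈ Hom(ℝ, G) continuous one-parameter groups such that D_{X₁}φ and D_{X₂}φ exist and are continuous on G. Then φ(gX₁(t)X₂(t)) = φ(g) + t((D_{X₁}φ)(g) + (D_{X₂}φ)(g)) + t·χ(g,t) for all (g,t) ∈ G × ℝ, where χ : G × ℝ → V is continuous with χ(g,0) = 0 for every g ∈ G. -/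
open Set Filter Topology

section Aux

variable {G V : Type*} [Group G] [TopologicalSpace G] [IsTopologicalGroup G]
  [AddCommGroup V] [Module ℝ V] [TopologicalSpace V] [IsTopologicalAddGroup V]
  [ContinuousSMul ℝ V] [LocallyConvexSpace ℝ V]

lemma aux_hasDerivAt (ψ : G → V) (X : ℝ → G)
    (hXadd : ∀ s t : ℝ, X (s + t) = X s * X t)
    (D : G → V)
    (hD : ∀ g : G, Tendsto (fun u : ℝ => u⁻¹ • (ψ (g * X u) - ψ g)) (𝓝[≠] (0:ℝ)) (𝓝 (D g)))
    (f : V →L[ℝ] ℝ) (g : G) (s : ℝ) :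
    HasDerivAt (fun y => f (ψ (g * X y))) (f (D (g * X s))) s := by
  rw [hasDerivAt_iff_tendsto_slope_zero]
  have h := ((f.continuous.tendsto _).comp (hD (g * X s)))
  refine h.congr fun u => ?_
  simp [Function.comp, hXadd s u, mul_assoc, map_smul, map_sub, smul_eq_mul]

lemma aux_mem_hull (ψ : G → V) (hψ : Continuous ψ) (X : ℝ → G)
    (hX0 : X 0 = 1)
    (hXadd : ∀ s t : ℝ, X (s + t) = X s * X t) (hXcont : Continuous X)
    (D : G → V)
    (hD : ∀ g : G, Tendsto (fun u : ℝ => u⁻¹ • (ψ (g * X u) - ψ g)) (𝓝[≠] (0:ℝ)) (𝓝 (D g)))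
    (g : G) (t : ℝ) (ht : t ≠ 0) :
    t⁻¹ • (ψ (g * X t) - ψ g) ∈
      closure (convexHull ℝ ((fun s => D (g * X s)) '' uIcc (0:ℝ) t)) := by
  by_contra hv
  obtain ⟨f, u, hfu, huv⟩ := geometric_hahn_banach_closed_point
    ((convex_convexHull ℝ _).closure) isClosed_closure hv
  have hcont : Continuous fun y : ℝ => f (ψ (g * X y)) :=
    f.continuous.comp (hψ.comp (continuous_const.mul hXcont))
  have hder := aux_hasDerivAt ψ X hXadd D hD f g
  have hfv : f (t⁻¹ • (ψ (g * X t) - ψ g)) =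
      t⁻¹ * (f (ψ (g * X t)) - f (ψ (g * X 0))) := by
    rw [hX0, mul_one, map_smul, map_sub, smul_eq_mul]
  have key : ∃ c ∈ uIcc (0:ℝ) t, f (D (g * X c)) = f (t⁻¹ • (ψ (g * X t) - ψ g)) := by
    rcases ht.lt_or_gt with h | h
    · obtain ⟨c, hc, hc'⟩ := exists_hasDerivAt_eq_slope (fun y => f (ψ (g * X y)))
        (fun y => f (D (g * X y))) h hcont.continuousOn (fun x _ => hder x)
      refine ⟨c, ?_, ?_⟩
      · rcases hc with ⟨h1, h2⟩
        rw [mem_uIcc]; right; exact ⟨h1.le, h2.le⟩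
      · rw [hc', hfv]
        rw [zero_sub, div_neg, ← neg_div, neg_sub, div_eq_inv_mul]
    · obtain ⟨c, hc, hc'⟩ := exists_hasDerivAt_eq_slope (fun y => f (ψ (g * X y)))
        (fun y => f (D (g * X y))) h hcont.continuousOn (fun x _ => hder x)
      refine ⟨c, ?_, ?_⟩
      · rcases hc with ⟨h1, h2⟩
        rw [mem_uIcc]; left; exact ⟨h1.le, h2.le⟩
      · rw [hc', hfv]
        field_simp
        ring
    
  obtain ⟨c, hc, hceq⟩ := key
  have hmem : D (g * X c) ∈ closure (convexHull ℝ ((fun s => D (g * X s)) '' uIcc (0:ℝ) t)) :=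
    subset_closure (subset_convexHull ℝ _ (mem_image_of_mem _ hc))
  have := hfu _ hmem
  rw [hceq] at this
  linarith

lemma aux_chi (ψ : G → V) (hψ : Continuous ψ) (X : ℝ → G)
    (hX0 : X 0 = 1)
    (hXadd : ∀ s t : ℝ, X (s + t) = X s * X t) (hXcont : Continuous X)
    (D : G → V) (hDcont : Continuous D)
    (hD : ∀ g : G, Tendsto (fun u : ℝ => u⁻¹ • (ψ (g * X u) - ψ g)) (𝓝[≠] (0:ℝ)) (𝓝 (D g)))
    (b : G × ℝ → G) (hb : Continuous b) (hb0 : ∀ g : G, b (g, 0) = g) :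
    ∃ χ : G × ℝ → V, Continuous χ ∧ (∀ g : G, χ (g, 0) = 0) ∧
      ∀ (g : G) (t : ℝ),
        ψ (b (g, t) * X t) = ψ (b (g, t)) + t • D g + t • χ (g, t) := by
  classical
  set χ : G × ℝ → V := fun p =>
    if p.2 = 0 then 0 else p.2⁻¹ • (ψ (b p * X p.2) - ψ (b p)) - D p.1 with hχdef
  have hχ0 : ∀ g : G, χ (g, 0) = 0 := fun g => by simp [hχdef]
  refine ⟨χ, ?_, hχ0, ?_⟩
  · rw [continuous_iff_continuousAt]
    rintro ⟨g₀, t₀⟩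
    rcases eq_or_ne t₀ 0 with rfl | ht₀
    · -- continuity at t₀ = 0
      rw [ContinuousAt, hχ0 g₀]
      rw [(closed_nhds_basis (0:V)).tendsto_right_iff]
      rintro W ⟨hWn, hWc⟩
      obtain ⟨C, ⟨hCn, hCconv⟩, hCW⟩ :=
        (LocallyConvexSpace.convex_basis_zero ℝ V).mem_iff.mp hWn
      -- the auxiliary continuous map
      set Θ : G × ℝ × ℝ → V := fun q => D (b (q.1, q.2.1) * X q.2.2) - D q.1 with hΘdef
      have hΘcont : Continuous Θ := by
        apply Continuous.sub
        · exact hDcont.comp ((hb.comp (continuous_fst.prodMk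
            (continuous_fst.comp continuous_snd))).mul
            (hXcont.comp (continuous_snd.comp continuous_snd)))
        · exact hDcont.comp continuous_fst
      have hΘ0 : Θ (g₀, (0, 0)) = 0 := by simp [hΘdef, hb0, hX0]
      have hpre : Θ ⁻¹' C ∈ 𝓝 (g₀, ((0:ℝ), (0:ℝ))) := by
        apply hΘcont.continuousAt.preimage_mem_nhds
        rw [hΘ0]; exact hCn
      rw [nhds_prod_eq, nhds_prod_eq] at hpre
      obtain ⟨A, hA, B, hB, hAB⟩ := mem_prod_iff.mp hpre
      obtain ⟨I, hI, J, hJ, hIJ⟩ := mem_prod_iff.mp hB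
      obtain ⟨δ₁, hδ₁, hIball⟩ := Metric.mem_nhds_iff.mp hI
      obtain ⟨δ₂, hδ₂, hJball⟩ := Metric.mem_nhds_iff.mp hJ
      set δ := min δ₁ δ₂ with hδdef
      have hδ : 0 < δ := lt_min hδ₁ hδ₂
      have hball : ∀ s : ℝ, |s| < δ₁ → s ∈ I := fun s hs =>
        hIball (by simpa [Real.dist_eq] using hs)
      have hball' : ∀ s : ℝ, |s| < δ₂ → s ∈ J := fun s hs =>
        hJball (by simpa [Real.dist_eq] using hs)
      have hev : A ×ˢ Metric.ball (0:ℝ) δ ∈ 𝓝 (g₀, (0:ℝ)) :=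
        prod_mem_nhds hA (Metric.ball_mem_nhds _ hδ)
      filter_upwards [hev] with p hp
      obtain ⟨hpg, hpt⟩ := hp
      obtain ⟨g, t⟩ := p
      simp only [Metric.mem_ball, Real.dist_eq, sub_zero] at hpt
      rcases eq_or_ne t 0 with rfl | ht
      · rw [hχ0 g]; exact mem_of_mem_nhds hWn
      · -- t ≠ 0 case: use the mean value hull lemma
        have hv := aux_mem_hull ψ hψ X hX0 hXadd hXcont D hD (b (g, t)) t ht
        -- T is the convex set C translated by D g
        set T : Set V := {x : V | x - D g ∈ C} with hTdef
        have hTconv : Convex ℝ T := by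
          intro x hx y hy a bb ha hbb hab
          simp only [hTdef, mem_setOf_eq] at hx hy ⊢
          have hxy : a • x + bb • y - D g = a • (x - D g) + bb • (y - D g) := by
            have h1 : a • (x - D g) + bb • (y - D g)
                = a • x + bb • y - (a • D g + bb • D g) := by
              rw [smul_sub, smul_sub]; abel
            rw [h1, ← add_smul, hab, one_smul]
          rw [hxy]
          exact hCconv hx hy ha hbb hab
        have hST : (fun s => D (b (g, t) * X s)) '' uIcc (0:ℝ) t ⊆ T := by
          rintro x ⟨s, hs, rfl⟩
          have hsabs : |s| < δ := by
            rcases mem_uIcc.mp hs with ⟨h1, h2⟩ | ⟨h1, h2⟩ <;>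
              (rw [abs_lt] at hpt ⊢; constructor <;> linarith)
          have hin : (t, s) ∈ I ×ˢ J :=
            ⟨hball t (lt_of_lt_of_le hpt (min_le_left _ _)),
             hball' s (lt_of_lt_of_le hsabs (min_le_right _ _))⟩
          have hmem := hAB (Set.mk_mem_prod hpg (hIJ hin))
          simpa [hΘdef, hTdef] using hmem
        have hT' : closure T ⊆ {x : V | x - D g ∈ W} := by
          apply closure_minimal
          · intro x hx
            exact hCW hx
          · exact IsClosed.preimage (continuous_id.sub continuous_const) hWc
        have : t⁻¹ • (ψ (b (g, t) * X t) - ψ (b (g, t))) ∈ closure T :=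
          closure_mono (convexHull_min hST hTconv) hv
        have hfin := hT' this
        simpa [hχdef, if_neg ht] using hfin
    · -- continuity at t₀ ≠ 0
      have hc : ContinuousAt
          (fun p : G × ℝ => p.2⁻¹ • (ψ (b p * X p.2) - ψ (b p)) - D p.1) (g₀, t₀) := by
        apply ContinuousAt.sub
        · apply ContinuousAt.smul
          · exact (continuous_snd.continuousAt (x := ((g₀ : G), t₀))).inv₀ ht₀
          · apply ContinuousAt.sub
            · exact ((hψ.comp (hb.mul (hXcont.comp continuous_snd))).continuousAt)
            · exact (hψ.comp hb).continuousAt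
        · exact (hDcont.comp continuous_fst).continuousAt
      apply hc.congr
      have hev : ∀ᶠ p : G × ℝ in 𝓝 (g₀, t₀), p.2 ≠ 0 :=
        continuous_snd.continuousAt.eventually_ne ht₀
      filter_upwards [hev] with p hp
      simp [hχdef, if_neg hp]
  · intro g t
    rcases eq_or_ne t 0 with rfl | ht
    · simp [hχ0 g, hX0]
    · have : χ (g, t) = t⁻¹ • (ψ (b (g, t) * X t) - ψ (b (g, t))) - D g := by
        simp [hχdef, if_neg ht]
      rw [this, smul_sub, smul_smul, mul_inv_cancel₀ ht, one_smul]
      abel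

end Aux

/-- **Lemma 2.5(ii).** Let `G` be a topological group, `V` a (Hausdorff) locally convex
space, `φ : G → V` continuous, and `X₁, X₂ : ℝ → G` continuous one-parameter groups such
that `D_{X₁}φ` and `D_{X₂}φ` exist everywhere and are continuous.  Then
`φ(g X₁(t) X₂(t)) = φ(g) + t((D_{X₁}φ)(g) + (D_{X₂}φ)(g)) + t χ(g,t)` for all `(g,t)`,
where `χ : G × ℝ → V` is continuous with `χ(g,0) = 0` for all `g ∈ G`. -/
theorem first_order_expansion_product_of_one_parameter_groups
    {G V : Type*} [Group G] [TopologicalSpace G] [IsTopologicalGroup G] [T2Space G]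
    [AddCommGroup V] [Module ℝ V] [TopologicalSpace V] [IsTopologicalAddGroup V]
    [ContinuousSMul ℝ V] [LocallyConvexSpace ℝ V] [T2Space V]
    (φ : G → V) (hφ : Continuous φ)
    (X₁ X₂ : ℝ → G)
    (hX₁0 : X₁ 0 = 1) (hX₁add : ∀ s t : ℝ, X₁ (s + t) = X₁ s * X₁ t)
    (hX₁cont : Continuous X₁)
    (hX₂0 : X₂ 0 = 1) (hX₂add : ∀ s t : ℝ, X₂ (s + t) = X₂ s * X₂ t)
    (hX₂cont : Continuous X₂)
    (D₁ D₂ : G → V) (hD₁cont : Continuous D₁) (hD₂cont : Continuous D₂)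
    (hD₁ : ∀ g : G, Tendsto (fun t : ℝ => t⁻¹ • (φ (g * X₁ t) - φ g)) (𝓝[≠] (0 : ℝ))
      (𝓝 (D₁ g)))
    (hD₂ : ∀ g : G, Tendsto (fun t : ℝ => t⁻¹ • (φ (g * X₂ t) - φ g)) (𝓝[≠] (0 : ℝ))
      (𝓝 (D₂ g))) :
    ∃ χ : G × ℝ → V, Continuous χ ∧ (∀ g : G, χ (g, 0) = 0) ∧
      ∀ (g : G) (t : ℝ),
        φ (g * X₁ t * X₂ t) = φ g + t • (D₁ g + D₂ g) + t • χ (g, t) := by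
  obtain ⟨χ₁, hχ₁cont, hχ₁0, hχ₁⟩ := aux_chi φ hφ X₁ hX₁0 hX₁add hX₁cont D₁ hD₁cont hD₁
    (fun p => p.1) continuous_fst (fun g => rfl)
  obtain ⟨χ₂, hχ₂cont, hχ₂0, hχ₂⟩ := aux_chi φ hφ X₂ hX₂0 hX₂add hX₂cont D₂ hD₂cont hD₂
    (fun p => p.1 * X₁ p.2) (continuous_fst.mul (hX₁cont.comp continuous_snd))
    (fun g => by simp [hX₁0])
  refine ⟨χ₁ + χ₂, hχ₁cont.add hχ₂cont, fun g => by simp [hχ₁0 g, hχ₂0 g], fun g t => ?_⟩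
  have h1 := hχ₁ g t
  have h2 := hχ₂ g t
  simp only at h1 h2
  rw [h2, h1, Pi.add_apply, smul_add, smul_add]
  abel
end

section
/- Let G be a topological group, V a locally convex space, and X, X₁, X₂ continuous one-parameter groups in G with X(t) = limₙ (X₁(t/n)X₂(t/n))ⁿ uniformly on compact subsets of ℝ. Let φ : G → V be continuous such that D_{X₁}φ and D_{X₂}φ exist everywhere and are continuous. Then D_Xφ exists everywhere and D_Xφ = D_{X₁}φ + D_{X₂}φ. -/
open Set Filter Topology

/-- Mean value theorem, convex-set version, for curves in a locally convex space:
if `F` has (slope-)derivative `F' s` for every `s`, and `F' s` lies in a closed convex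
set `C` for all `s` in the interval from `0` to `r`, then the difference quotient
`r⁻¹ • (F r - F 0)` lies in `C` as well. -/
lemma trotter_aux_mvt_hull {V : Type*} [AddCommGroup V] [Module ℝ V] [TopologicalSpace V]
    [IsTopologicalAddGroup V] [ContinuousSMul ℝ V] [LocallyConvexSpace ℝ V]
    {F F' : ℝ → V}
    (hF : ∀ s : ℝ, Tendsto (fun u : ℝ => (u - s)⁻¹ • (F u - F s)) (𝓝[≠] s) (𝓝 (F' s)))
    {C : Set V} (hC : Convex ℝ C) (hCc : IsClosed C) {r : ℝ} (hr : r ≠ 0)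
    (hmem : ∀ s ∈ uIcc (0:ℝ) r, F' s ∈ C) :
    r⁻¹ • (F r - F 0) ∈ C := by
  by_contra hx
  obtain ⟨f, u, hfu, hux⟩ := geometric_hahn_banach_closed_point hC hCc hx
  have hderiv : ∀ s : ℝ, HasDerivAt (fun y => u * y - f (F y)) (u - f (F' s)) s := by
    intro s
    have h1 : HasDerivAt (fun y : ℝ => f (F y)) (f (F' s)) s := by
      rw [hasDerivAt_iff_tendsto_slope]
      have : slope (fun y => f (F y)) s = fun y => f ((y - s)⁻¹ • (F y - F s)) := by
        funext y
        simp [slope_def_module, map_sub, map_smul, smul_eq_mul]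
      rw [this]
      exact (f.continuous.tendsto _).comp (hF s)
    have h2 : HasDerivAt (fun y : ℝ => u * y) u s := by
      simpa using (hasDerivAt_id s).const_mul u
    exact h2.sub h1
  have hcont : Continuous (fun y : ℝ => u * y - f (F y)) :=
    continuous_iff_continuousAt.2 fun s => (hderiv s).continuousAt
  have hmono : StrictMonoOn (fun y : ℝ => u * y - f (F y)) (uIcc 0 r) := by
    apply strictMonoOn_of_deriv_pos (convex_uIcc 0 r) hcont.continuousOn
    intro x hx'
    rw [(hderiv x).deriv]
    have : F' x ∈ C := hmem x (interior_subset hx')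
    have := hfu _ this
    linarith
  have hminmem : (0 ⊓ r : ℝ) ∈ uIcc 0 r := by
    rw [Set.uIcc]; exact Set.left_mem_Icc.2 inf_le_sup
  have hmaxmem : (0 ⊔ r : ℝ) ∈ uIcc 0 r := by
    rw [Set.uIcc]; exact Set.right_mem_Icc.2 inf_le_sup
  have hlt : (0 ⊓ r : ℝ) < 0 ⊔ r := inf_lt_sup.2 (Ne.symm hr)
  have hkey := hmono hminmem hmaxmem hlt
  have hfx : f (r⁻¹ • (F r - F 0)) = r⁻¹ * (f (F r) - f (F 0)) := by
    simp [map_sub, map_smul, smul_eq_mul]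
  rcases lt_or_gt_of_ne hr with hneg | hpos
  · have hmin : (0 ⊓ r : ℝ) = r := inf_eq_right.2 hneg.le
    have hmax : (0 ⊔ r : ℝ) = 0 := sup_eq_left.2 hneg.le
    rw [hmin, hmax] at hkey
    simp only [mul_zero] at hkey
    -- hkey : u * r - f (F r) < 0 - f (F 0), i.e. u * r < f (F r) - f (F 0)
    have hd : u * r < f (F r) - f (F 0) := by linarith
    have : f (r⁻¹ • (F r - F 0)) < u := by
      rw [hfx, inv_mul_eq_div]
      exact (div_lt_iff_of_neg hneg).2 (by linarith)
    linarith
  · have hmin : (0 ⊓ r : ℝ) = 0 := inf_eq_left.2 hpos.le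
    have hmax : (0 ⊔ r : ℝ) = r := sup_eq_right.2 hpos.le
    rw [hmin, hmax] at hkey
    simp only [mul_zero] at hkey
    have hd : f (F r) - f (F 0) < u * r := by linarith
    have : f (r⁻¹ • (F r - F 0)) < u := by
      rw [hfx, inv_mul_eq_div]
      exact (div_lt_iff₀ hpos).2 (by linarith)
    linarith

/-- Translation of the derivative hypothesis: from the difference quotient at `0` to the
slope at an arbitrary base point `s`. -/
lemma trotter_aux_slope {G V : Type*} [Group G] [TopologicalSpace V] [AddCommGroup V]
    [Module ℝ V]
    {φ : G → V} {Y : ℝ → G} (hYadd : ∀ s t : ℝ, Y (s + t) = Y s * Y t)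
    {D : G → V}
    (hD : ∀ h : G, Tendsto (fun τ : ℝ => τ⁻¹ • (φ (h * Y τ) - φ h)) (𝓝[≠] 0) (𝓝 (D h)))
    (h : G) (s : ℝ) :
    Tendsto (fun u : ℝ => (u - s)⁻¹ • (φ (h * Y u) - φ (h * Y s))) (𝓝[≠] s)
      (𝓝 (D (h * Y s))) := by
  have hmap : Tendsto (fun u : ℝ => u - s) (𝓝[≠] s) (𝓝[≠] (0:ℝ)) := by
    rw [tendsto_nhdsWithin_iff]
    constructor
    · have : Tendsto (fun u : ℝ => u - s) (𝓝 s) (𝓝 (s - s)) :=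
        (continuous_id.sub continuous_const).tendsto s
      rw [sub_self] at this
      exact this.mono_left nhdsWithin_le_nhds
    · exact eventually_mem_nhdsWithin.mono fun u hu => by
        simpa [sub_ne_zero] using hu
  have := (hD (h * Y s)).comp hmap
  convert this using 1
  funext u
  simp only [Function.comp_apply]
  congr 2
  rw [mul_assoc, ← hYadd]
  congr 2
  ring


open Pointwise in 
/-- **Lemma 2.6.** Let `G` be a topological group, `V` a (Hausdorff) locally convex
space, and `X, X₁, X₂` continuous one-parameter groups of `G` with `X = X₁ + X₂` in the
Trotter sense: `X(t) = limₙ (X₁(t/n) X₂(t/n))ⁿ` uniformly on compact subsets of `ℝ`.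
If `φ : G → V` is continuous and `D_{X₁}φ`, `D_{X₂}φ` exist everywhere and are
continuous, then `D_Xφ` exists everywhere and `D_Xφ = D_{X₁}φ + D_{X₂}φ`. -/
theorem trotter_sum_derivative
    {G V : Type*} [Group G] [TopologicalSpace G] [IsTopologicalGroup G] [T2Space G]
    [AddCommGroup V] [Module ℝ V] [TopologicalSpace V] [IsTopologicalAddGroup V]
    [ContinuousSMul ℝ V] [LocallyConvexSpace ℝ V] [T2Space V]
    (X X₁ X₂ : ℝ → G)
    (hX0 : X 0 = 1) (hXadd : ∀ s t : ℝ, X (s + t) = X s * X t) (hXcont : Continuous X)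
    (hX₁0 : X₁ 0 = 1) (hX₁add : ∀ s t : ℝ, X₁ (s + t) = X₁ s * X₁ t)
    (hX₁cont : Continuous X₁)
    (hX₂0 : X₂ 0 = 1) (hX₂add : ∀ s t : ℝ, X₂ (s + t) = X₂ s * X₂ t)
    (hX₂cont : Continuous X₂)
    (htrotter : ∀ K : Set ℝ, IsCompact K → ∀ U ∈ 𝓝 (1 : G), ∃ N : ℕ, ∀ n ≥ N, ∀ t ∈ K,
      (X t)⁻¹ * (X₁ (t / n) * X₂ (t / n)) ^ n ∈ U)
    (φ : G → V) (hφ : Continuous φ)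
    (D₁ D₂ : G → V) (hD₁cont : Continuous D₁) (hD₂cont : Continuous D₂)
    (hD₁ : ∀ g : G, Tendsto (fun t : ℝ => t⁻¹ • (φ (g * X₁ t) - φ g)) (𝓝[≠] (0 : ℝ))
      (𝓝 (D₁ g)))
    (hD₂ : ∀ g : G, Tendsto (fun t : ℝ => t⁻¹ • (φ (g * X₂ t) - φ g)) (𝓝[≠] (0 : ℝ))
      (𝓝 (D₂ g))) :
    ∀ g : G, Tendsto (fun t : ℝ => t⁻¹ • (φ (g * X t) - φ g)) (𝓝[≠] (0 : ℝ))
      (𝓝 (D₁ g + D₂ g)) := by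
  intro g
  set S₀ : V := D₁ g + D₂ g with hS₀def
  rw [← tendsto_sub_nhds_zero_iff, Filter.tendsto_def]
  intro U₀ hU₀
  -- Step 1/2: closed convex neighborhood C̃ of 0 inside U₀, and its half Ch
  obtain ⟨W, hWnhds, hWclosed, hWsub⟩ := exists_mem_nhds_isClosed_subset hU₀
  obtain ⟨C₀, ⟨hC₀nhds, hC₀conv⟩, hC₀sub⟩ :=
    (LocallyConvexSpace.convex_basis_zero ℝ V).mem_iff.1 hWnhds
  set Ct : Set V := closure C₀ with hCtdef
  have hCtnhds : Ct ∈ 𝓝 (0:V) := mem_of_superset hC₀nhds subset_closure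
  have hCtclosed : IsClosed Ct := isClosed_closure
  have hCtconv : Convex ℝ Ct := hC₀conv.closure
  have hCtU₀ : Ct ⊆ U₀ := (hWclosed.closure_subset_iff.2 hC₀sub).trans hWsub
  set Ch : Set V := (2⁻¹ : ℝ) • Ct with hChdef
  have hChnhds : Ch ∈ 𝓝 (0:V) := by
    rw [hChdef]
    exact (set_smul_mem_nhds_zero_iff (by norm_num : (2⁻¹:ℝ) ≠ 0)).2 hCtnhds
  have hChclosed : IsClosed Ch := hCtclosed.smul_of_ne_zero (by norm_num)
  have hChconv : Convex ℝ Ch := hCtconv.smul _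
  have hChCh : ∀ x ∈ Ch, ∀ y ∈ Ch, x + y ∈ Ct := by
    rintro x ⟨a, ha, rfl⟩ y ⟨b, hb, rfl⟩
    exact hCtconv ha hb (by norm_num) (by norm_num) (by norm_num)
  -- Step 3: the good neighborhood S of g
  set S : Set G := {h | D₁ h - D₁ g ∈ Ch ∧ D₂ h - D₂ g ∈ Ch} with hSdef
  have hS : S ∈ 𝓝 g := by
    have h1 : ContinuousAt (fun h => D₁ h - D₁ g) g := (hD₁cont.sub continuous_const).continuousAt
    have h2 : ContinuousAt (fun h => D₂ h - D₂ g) g := (hD₂cont.sub continuous_const).continuousAt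
    have m1 : (fun h => D₁ h - D₁ g) ⁻¹' Ch ∈ 𝓝 g :=
      h1.preimage_mem_nhds (by simpa using hChnhds)
    have m2 : (fun h => D₂ h - D₂ g) ⁻¹' Ch ∈ 𝓝 g :=
      h2.preimage_mem_nhds (by simpa using hChnhds)
    exact Filter.inter_mem m1 m2
  -- Step 4: neighborhoods δ, V₁, V₂ adapted to S
  have hPcont : ContinuousAt (fun p : ℝ × G × G => g * X p.1 * p.2.1 * p.2.2) (0, 1, 1) := by
    apply Continuous.continuousAt
    exact ((continuous_const.mul (hXcont.comp continuous_fst)).mul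
      (continuous_fst.comp continuous_snd)).mul (continuous_snd.comp continuous_snd)
  have hPval : g * X (0:ℝ) * 1 * 1 = g := by rw [hX0, mul_one, mul_one, mul_one]
  have hPS : (fun p : ℝ × G × G => g * X p.1 * p.2.1 * p.2.2) ⁻¹' S ∈ 𝓝 ((0:ℝ), (1:G), (1:G)) :=
    hPcont.preimage_mem_nhds (by rw [hPval]; exact hS)
  obtain ⟨T, hT, R, hR, hTR⟩ := mem_nhds_prod_iff.1 hPS
  obtain ⟨V₁, hV₁, V₂, hV₂, hV₁₂⟩ := mem_nhds_prod_iff.1 hR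
  obtain ⟨δ, hδpos, hδball⟩ := Metric.mem_nhds_iff.1 hT
  have hkey : ∀ (a : ℝ) (u b : G), |a| < δ → u ∈ V₁ → b ∈ V₂ → g * X a * u * b ∈ S := by
    intro a u b ha hu hb
    exact hTR (Set.mk_mem_prod (hδball (by simpa [Real.dist_eq] using ha))
      (hV₁₂ (Set.mk_mem_prod hu hb)))
  -- Step 5: η' such that X₁ a * X₂ b ∈ V₂ for |a|, |b| < η'
  have hρ : ContinuousAt (fun p : ℝ × ℝ => X₁ p.1 * X₂ p.2) (0, 0) :=
    ((hX₁cont.comp continuous_fst).mul (hX₂cont.comp continuous_snd)).continuousAt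
  have hρval : X₁ (0:ℝ) * X₂ (0:ℝ) = 1 := by rw [hX₁0, hX₂0, mul_one]
  have hρS : (fun p : ℝ × ℝ => X₁ p.1 * X₂ p.2) ⁻¹' V₂ ∈ 𝓝 ((0:ℝ), (0:ℝ)) := by
    apply hρ.preimage_mem_nhds
    rw [hρval]
    exact hV₂
  obtain ⟨A, hA, B, hB, hAB⟩ := mem_nhds_prod_iff.1 hρS
  obtain ⟨ηA, hηApos, hηA⟩ := Metric.mem_nhds_iff.1 hA
  obtain ⟨ηB, hηBpos, hηB⟩ := Metric.mem_nhds_iff.1 hB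
  set η' : ℝ := min ηA ηB with hη'def
  have hη'pos : 0 < η' := lt_min hηApos hηBpos
  have hV₂mem : ∀ a b : ℝ, |a| < η' → |b| < η' → X₁ a * X₂ b ∈ V₂ := by
    intro a b ha hb
    exact hAB (Set.mk_mem_prod
      (hηA (by simpa [Real.dist_eq] using ha.trans_le (min_le_left _ _)))
      (hηB (by simpa [Real.dist_eq] using hb.trans_le (min_le_right _ _))))
  -- Step 6: Trotter on [-δ, δ]
  obtain ⟨N, hN⟩ := htrotter (Icc (-δ) δ) isCompact_Icc V₁ hV₁
  set N' : ℕ := N + 1 with hN'def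
  -- Step 7: η for small powers
  have hev : ∀ᶠ ρ : ℝ in 𝓝 0, ∀ k ∈ Finset.range N',
      (X ((k:ℝ) * ρ))⁻¹ * (X₁ ρ * X₂ ρ) ^ k ∈ V₁ := by
    rw [eventually_all_finset]
    intro k _
    have hc : Continuous fun ρ : ℝ => (X ((k:ℝ) * ρ))⁻¹ * (X₁ ρ * X₂ ρ) ^ k :=
      ((hXcont.comp (continuous_const.mul continuous_id)).inv).mul
        ((hX₁cont.mul hX₂cont).pow k)
    have hval : (X ((k:ℝ) * 0))⁻¹ * (X₁ 0 * X₂ 0) ^ k = 1 := by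
      rw [mul_zero, hX0, hX₁0, hX₂0, mul_one, one_pow, inv_one, mul_one]
    exact hc.continuousAt.eventually_mem (by rw [hval]; exact hV₁)
  obtain ⟨η, hηpos, hη⟩ := Metric.eventually_nhds_iff.1 hev
  -- Step 8: M
  set m : ℝ := min η η' with hmdef
  have hmpos : 0 < m := lt_min hηpos hη'pos
  set M : ℕ := max N' (⌈δ / m⌉₊ + 1) with hMdef
  have hMprop : ∀ n : ℕ, M ≤ n → δ / n < m ∧ N' ≤ n ∧ (n:ℝ) ≠ 0 := by
    intro n hn
    have hn1 : ⌈δ / m⌉₊ + 1 ≤ n := le_trans (le_max_right _ _) hn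
    have hnN' : N' ≤ n := le_trans (le_max_left _ _) hn
    have hnpos : 0 < n := lt_of_lt_of_le (Nat.succ_pos _) hn1
    have hnR : (0:ℝ) < n := Nat.cast_pos.2 hnpos
    have h1 : δ / m < n := by
      calc δ / m ≤ ⌈δ / m⌉₊ := Nat.le_ceil _
        _ < (⌈δ / m⌉₊ + 1 : ℕ) := by exact_mod_cast Nat.lt_succ_self _
        _ ≤ n := by exact_mod_cast hn1
    refine ⟨?_, hnN', hnR.ne'⟩
    rw [div_lt_iff₀ hnR]
    rw [div_lt_iff₀ hmpos] at h1
    linarith [h1]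
  -- Step 9: main estimate
  have key : ∀ t : ℝ, t ≠ 0 → |t| < δ → ∀ n : ℕ, M ≤ n →
      t⁻¹ • (φ (g * (X₁ (t / n) * X₂ (t / n)) ^ n) - φ g) - S₀ ∈ Ct := by
    intro t ht0 htδ n hn
    obtain ⟨hδn, hnN', hn0⟩ := hMprop n hn
    set r : ℝ := t / n with hrdef
    have hnRpos : (0:ℝ) < n := lt_of_le_of_ne (Nat.cast_nonneg n) (Ne.symm hn0)
    have hr0 : r ≠ 0 := div_ne_zero ht0 hn0
    have hrsmall : |r| < m := by
      have : |r| = |t| / n := by rw [hrdef, abs_div, Nat.abs_cast]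
      rw [this]
      calc |t| / n < δ / n := by gcongr
        _ < m := hδn
    have hrη : |r| < η := hrsmall.trans_le (min_le_left _ _)
    have hrη' : |r| < η' := hrsmall.trans_le (min_le_right _ _)
    set q : ℕ → G := fun k => (X₁ r * X₂ r) ^ k with hqdef
    have habs_kr : ∀ k : ℕ, k ≤ n → |(k:ℝ) * r| < δ := by
      intro k hk
      rw [abs_mul, Nat.abs_cast]
      calc (k:ℝ) * |r| ≤ n * |r| := by gcongr
        _ = |t| := by
            rw [hrdef, abs_div, Nat.abs_cast]
            field_simp
        _ < δ := htδ
    have hu : ∀ k : ℕ, k ≤ n → (X ((k:ℝ) * r))⁻¹ * q k ∈ V₁ := by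
      intro k hk
      rcases lt_or_ge k N' with hkN' | hkN'
      · exact hη (by simpa [Real.dist_eq] using hrη) k (Finset.mem_range.2 hkN')
      · have hkpos : 0 < k := lt_of_lt_of_le (Nat.succ_pos N) hkN'
        have hk0 : (k:ℝ) ≠ 0 := by exact_mod_cast hkpos.ne'
        have hmem : (k:ℝ) * r ∈ Icc (-δ) δ := Set.mem_Icc.2 (abs_le.1 (habs_kr k hk).le)
        have := hN k (le_trans (Nat.le_succ N) hkN') ((k:ℝ) * r) hmem
        rwa [mul_div_cancel_left₀ r hk0] at this
    have hpt : ∀ k : ℕ, k < n → ∀ s ∈ uIcc (0:ℝ) r,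
        g * q k * X₁ s ∈ S ∧ g * q k * X₁ r * X₂ s ∈ S := by
      intro k hk s hs
      have habs_s : |s| ≤ |r| := by
        rcases Set.mem_uIcc.1 hs with ⟨h1, h2⟩ | ⟨h1, h2⟩ <;>
          (rw [abs_le]; constructor <;>
            linarith [abs_nonneg r, neg_abs_le r, le_abs_self r])
      have hqeq : g * q k = g * X ((k:ℝ) * r) * ((X ((k:ℝ) * r))⁻¹ * q k) := by
        rw [mul_assoc, mul_inv_cancel_left]
      constructor
      · have heq : g * q k * X₁ s
            = g * X ((k:ℝ) * r) * ((X ((k:ℝ) * r))⁻¹ * q k) * (X₁ s * X₂ 0) := by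
          rw [← hqeq, hX₂0, mul_one]
        rw [heq]
        exact hkey _ _ _ (habs_kr k hk.le) (hu k hk.le)
          (hV₂mem s 0 (lt_of_le_of_lt habs_s hrη') (by simpa using hη'pos))
      · have heq : g * q k * X₁ r * X₂ s
            = g * X ((k:ℝ) * r) * ((X ((k:ℝ) * r))⁻¹ * q k) * (X₁ r * X₂ s) := by
          rw [← hqeq, mul_assoc (g * q k)]
        rw [heq]
        exact hkey _ _ _ (habs_kr k hk.le) (hu k hk.le)
          (hV₂mem r s hrη' (lt_of_le_of_lt habs_s hrη'))
    have hCset₁conv : Convex ℝ {v : V | v - D₁ g ∈ Ch} := by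
      intro x hx y hy a b ha hb hab
      obtain rfl : b = 1 - a := by linarith
      have hkey2 : a • x + (1 - a) • y - D₁ g = a • (x - D₁ g) + (1 - a) • (y - D₁ g) := by
        module
      show a • x + (1 - a) • y - D₁ g ∈ Ch
      rw [hkey2]
      exact hChconv hx hy ha hb hab
    have hCset₂conv : Convex ℝ {v : V | v - D₂ g ∈ Ch} := by
      intro x hx y hy a b ha hb hab
      obtain rfl : b = 1 - a := by linarith
      have hkey2 : a • x + (1 - a) • y - D₂ g = a • (x - D₂ g) + (1 - a) • (y - D₂ g) := by
        module
      show a • x + (1 - a) • y - D₂ g ∈ Ch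
      rw [hkey2]
      exact hChconv hx hy ha hb hab
    have hCset₁closed : IsClosed {v : V | v - D₁ g ∈ Ch} :=
      hChclosed.preimage (continuous_id.sub continuous_const)
    have hCset₂closed : IsClosed {v : V | v - D₂ g ∈ Ch} :=
      hChclosed.preimage (continuous_id.sub continuous_const)
    have hb₁ : ∀ k : ℕ, k < n →
        r⁻¹ • (φ (g * q k * X₁ r) - φ (g * q k)) - D₁ g ∈ Ch := by
      intro k hk
      have hF := fun s => trotter_aux_slope hX₁add hD₁ (g * q k) s
      have hres := trotter_aux_mvt_hull hF hCset₁conv hCset₁closed hr0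
        (fun s hs => (hpt k hk s hs).1.1)
      rw [hX₁0, mul_one] at hres
      exact hres
    have hb₂ : ∀ k : ℕ, k < n →
        r⁻¹ • (φ (g * q k * X₁ r * X₂ r) - φ (g * q k * X₁ r)) - D₂ g ∈ Ch := by
      intro k hk
      have hF := fun s => trotter_aux_slope hX₂add hD₂ (g * q k * X₁ r) s
      have hres := trotter_aux_mvt_hull hF hCset₂conv hCset₂closed hr0
        (fun s hs => (hpt k hk s hs).2.2)
      rw [hX₂0, mul_one] at hres
      exact hres
    have hc : ∀ k : ℕ, k < n →
        r⁻¹ • (φ (g * q (k + 1)) - φ (g * q k)) - S₀ ∈ Ct := by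
      intro k hk
      have hq1 : g * q (k + 1) = g * q k * X₁ r * X₂ r := by
        show g * (X₁ r * X₂ r) ^ (k + 1) = g * (X₁ r * X₂ r) ^ k * X₁ r * X₂ r
        rw [pow_succ, ← mul_assoc, mul_assoc (g * (X₁ r * X₂ r) ^ k)]
      have heq : r⁻¹ • (φ (g * q (k + 1)) - φ (g * q k)) - S₀ =
          (r⁻¹ • (φ (g * q k * X₁ r) - φ (g * q k)) - D₁ g) +
          (r⁻¹ • (φ (g * q k * X₁ r * X₂ r) - φ (g * q k * X₁ r)) - D₂ g) := by
        rw [hq1, hS₀def, smul_sub, smul_sub, smul_sub]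
        abel
      rw [heq]
      exact hChCh _ (hb₁ k hk) _ (hb₂ k hk)
    have hsum_eq : ∑ k ∈ Finset.range n,
        (n:ℝ)⁻¹ • (r⁻¹ • (φ (g * q (k + 1)) - φ (g * q k)) - S₀)
        = t⁻¹ • (φ (g * q n) - φ g) - S₀ := by
      rw [← Finset.smul_sum, Finset.sum_sub_distrib, ← Finset.smul_sum,
        Finset.sum_range_sub (fun k => φ (g * q k)), Finset.sum_const, Finset.card_range]
      have hq0 : g * q 0 = g := by
        show g * (X₁ r * X₂ r) ^ 0 = g
        rw [pow_zero, mul_one]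
      rw [hq0, smul_sub, smul_smul, ← Nat.cast_smul_eq_nsmul ℝ n S₀, smul_smul,
        inv_mul_cancel₀ hn0, one_smul]
      congr 2
      rw [hrdef]
      rw [← mul_inv]
      congr 1
      field_simp
    show t⁻¹ • (φ (g * q n) - φ g) - S₀ ∈ Ct
    rw [← hsum_eq]
    refine hCtconv.sum_mem (fun i _ => by positivity) ?_
      (fun i hi => hc i (Finset.mem_range.1 hi))
    rw [Finset.sum_const, Finset.card_range, nsmul_eq_mul, mul_inv_cancel₀ hn0]
  -- Step 10: pass to the limit n → ∞
  have hlim : ∀ t : ℝ,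
      Tendsto (fun n : ℕ => t⁻¹ • (φ (g * (X₁ (t / n) * X₂ (t / n)) ^ n) - φ g) - S₀)
      atTop (𝓝 (t⁻¹ • (φ (g * X t) - φ g) - S₀)) := by
    intro t
    have hq' : Tendsto (fun n : ℕ => (X t)⁻¹ * (X₁ (t / n) * X₂ (t / n)) ^ n) atTop
        (𝓝 (1:G)) := by
      rw [Filter.tendsto_def]
      intro U hU
      obtain ⟨N₁, hN₁⟩ := htrotter {t} isCompact_singleton U hU
      exact Filter.mem_atTop_sets.2 ⟨N₁, fun n hn => hN₁ n hn t rfl⟩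
    have hq : Tendsto (fun n : ℕ => (X₁ (t / n) * X₂ (t / n)) ^ n) atTop (𝓝 (X t)) := by
      have h2 := ((continuous_mul_left (X t)).tendsto 1).comp hq'
      simp only [Function.comp_def, mul_inv_cancel_left, mul_one] at h2
      exact h2
    have hcontmap : Continuous fun x : G => t⁻¹ • (φ (g * x) - φ g) - S₀ :=
      (continuous_const.smul ((hφ.comp (continuous_mul_left g)).sub continuous_const)).sub
        continuous_const
    exact (hcontmap.tendsto (X t)).comp hq
  -- conclusion
  rw [Metric.mem_nhdsWithin_iff]
  refine ⟨δ, hδpos, ?_⟩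
  rintro y ⟨hy1, hy2⟩
  have hy0 : y ≠ 0 := hy2
  have hyδ : |y| < δ := by simpa [Real.dist_eq] using hy1
  have hmem : y⁻¹ • (φ (g * X y) - φ g) - S₀ ∈ Ct :=
    hCtclosed.mem_of_tendsto (hlim y)
      (Filter.eventually_atTop.2 ⟨M, fun n hn => key y hy0 hyδ n hn⟩)
  exact hCtU₀ hmem
end

section
/- Let G be a Fréchet–Lie group with the Trotter property and (π, V) a continuous representation of G on a metrizable locally convex space V. Then for each v ∈ Dⁿ (the space of vectors v such that all iterated derived operators up to order n are defined on v), the map ω_vⁿ : 𝔤ⁿ → V, (x₁, …, xₙ) ↦ d̄π(x₁)⋯d̄π(xₙ)v, is continuous and n-linear. (The proof of continuity uses a Baire category argument: ω_vⁿ is a pointwise limit of continuous maps on the Baire space 𝔤ⁿ, hence has a point of continuity, and multilinearity upgrades this to global continuity.) -/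
open Set Filter Topology
open scoped Uniformity

/-- A Lie group modeled on a locally convex space, recorded through its underlying
topological group together with its Lie algebra `g` and its (smooth) exponential
function. -/
structure ExpLieGroup (G : Type*) [Group G] [TopologicalSpace G]
    (g : Type*) [AddCommGroup g] [Module ℝ g] [TopologicalSpace g] where
  exp : g → G
  exp_zero : exp 0 = 1
  exp_add : ∀ (x : g) (s t : ℝ), exp ((s + t) • x) = exp (s • x) * exp (t • x)
  continuous_exp : Continuous exp

/-- The Trotter property. -/
def ExpLieGroup.HasTrotter {G : Type*} [Group G] [TopologicalSpace G]
    {g : Type*} [AddCommGroup g] [Module ℝ g] [TopologicalSpace g]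
    (E : ExpLieGroup G g) : Prop :=
  ∀ x y : g, ∀ K : Set ℝ, IsCompact K → ∀ U ∈ 𝓝 (1 : G), ∃ N : ℕ, ∀ n ≥ N, ∀ t ∈ K,
    (E.exp (t • (x + y)))⁻¹ * (E.exp ((t / n) • x) * E.exp ((t / n) • y)) ^ n ∈ U


set_option linter.unusedSectionVars false
set_option maxHeartbeats 1600000


lemma baire_exists_continuousAt {X Y : Type*} [TopologicalSpace X] [BaireSpace X] [Nonempty X]
    [PseudoMetricSpace Y] {f : ℕ → X → Y} {F : X → Y}
    (hf : ∀ k, Continuous (f k)) (h : ∀ x, Tendsto (fun k => f k x) atTop (𝓝 (F x))) :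
    ∃ x, ContinuousAt F x := by
  set A : ℝ → Set X := fun ε => {x | ∃ U ∈ 𝓝 x, ∀ y ∈ U, ∀ z ∈ U, dist (F y) (F z) ≤ ε} with hA
  have hopen : ∀ ε, IsOpen (A ε) := by
    intro ε
    rw [isOpen_iff_mem_nhds]
    rintro x ⟨U, hU, hUd⟩
    filter_upwards [interior_mem_nhds.2 hU] with y hy
    exact ⟨interior U, interior_mem_nhds.2 (mem_interior_iff_mem_nhds.1 hy),
      fun a ha b hb => hUd a (interior_subset ha) b (interior_subset hb)⟩
  -- distance to limit bound
  have hlim : ∀ (N : ℕ) (ε : ℝ), ∀ y, (∀ m ≥ N, dist (f m y) (f N y) ≤ ε) →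
      dist (F y) (f N y) ≤ ε := by
    intro N ε y hy
    refine le_of_tendsto (((h y).dist tendsto_const_nhds) ) ?_
    filter_upwards [eventually_ge_atTop N] with m hm using hy m hm
  have hdense : ∀ ε : ℝ, 0 < ε → Dense (A ε) := by
    intro ε hε
    set E : ℕ → Set X := fun N =>
      {x | ∀ m ≥ N, ∀ m' ≥ N, dist (f m x) (f m' x) ≤ ε / 4} with hE
    have hEclosed : ∀ N, IsClosed (E N) := by
      intro N
      have : E N = ⋂ (m : ℕ) (_ : m ≥ N) (m' : ℕ) (_ : m' ≥ N),
          {x | dist (f m x) (f m' x) ≤ ε / 4} := by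
        ext x; simp [hE, Set.mem_iInter]
      rw [this]
      refine isClosed_iInter fun m => isClosed_iInter fun _ =>
        isClosed_iInter fun m' => isClosed_iInter fun _ => ?_
      exact isClosed_le (((hf m).dist (hf m'))) continuous_const
    have hEcover : (⋃ N, E N) = univ := by
      refine eq_univ_of_forall fun x => ?_
      have hc : CauchySeq fun k => f k x := (h x).cauchySeq
      rcases Metric.cauchySeq_iff.1 hc (ε / 4) (by positivity) with ⟨N, hN⟩
      exact mem_iUnion.2 ⟨N, fun m hm m' hm' => (hN m hm m' hm').le⟩
    have hdi : Dense (⋃ N, interior (E N)) :=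
      dense_iUnion_interior_of_closed hEclosed hEcover
    refine hdi.mono ?_
    refine iUnion_subset fun N => ?_
    intro x hx
    refine ⟨interior (E N) ∩ {y | dist (f N y) (f N x) ≤ ε / 4}, ?_, ?_⟩
    · refine inter_mem (interior_mem_nhds.2 (mem_interior_iff_mem_nhds.1 hx)) ?_
      have : Tendsto (fun y => dist (f N y) (f N x)) (𝓝 x) (𝓝 (dist (f N x) (f N x))) :=
        ((hf N).dist continuous_const).continuousAt
      rw [dist_self] at this
      filter_upwards [this (Iio_mem_nhds (show (0:ℝ) < ε / 4 by positivity))] with y hy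
      exact le_of_lt hy
    · rintro y ⟨hy1, hy2⟩ z ⟨hz1, hz2⟩
      have hyE : y ∈ E N := interior_subset hy1
      have hzE : z ∈ E N := interior_subset hz1
      have h1 : dist (F y) (f N y) ≤ ε / 4 := hlim N _ y fun m hm => hyE m hm N le_rfl
      have h2 : dist (f N z) (F z) ≤ ε / 4 := by
        rw [dist_comm]; exact hlim N _ z fun m hm => hzE m hm N le_rfl
      have h3 : dist (f N y) (f N z) ≤ ε / 4 + ε / 4 := by
        calc dist (f N y) (f N z) ≤ dist (f N y) (f N x) + dist (f N x) (f N z) :=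
              dist_triangle _ _ _
          _ ≤ ε / 4 + ε / 4 := by
              refine add_le_add hy2 ?_
              rw [dist_comm]; exact hz2
      calc dist (F y) (F z) ≤ dist (F y) (f N y) + dist (f N y) (f N z) + dist (f N z) (F z) :=
            dist_triangle4 _ _ _ _
        _ ≤ ε / 4 + (ε / 4 + ε / 4) + ε / 4 := by gcongr
        _ = ε := by ring
  have hD : Dense (⋂ m : ℕ, A (1 / (m + 1))) :=
    dense_iInter_of_isOpen (fun m => hopen _) (fun m => hdense _ (by positivity))
  obtain ⟨x, hx⟩ := hD.nonempty
  refine ⟨x, ?_⟩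
  rw [Metric.continuousAt_iff']
  intro ε hε
  obtain ⟨m, hm⟩ := exists_nat_one_div_lt (show 0 < ε / 2 by positivity)
  have hxA := mem_iInter.1 hx m
  obtain ⟨U, hU, hUd⟩ := hxA
  filter_upwards [hU] with y hy
  have hxU : x ∈ U := mem_of_mem_nhds hU
  calc dist (F y) (F x) ≤ 1 / (m + 1) := hUd y hy x hxU
    _ < ε / 2 := by exact_mod_cast hm
    _ < ε := by linarith


lemma exists_smul_tendsto_zero {E : Type*} [AddCommGroup E] [Module ℝ E] [TopologicalSpace E]
    [ContinuousSMul ℝ E] [FirstCountableTopology E]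
    {h : ℕ → E} (hh : Tendsto h atTop (𝓝 0)) :
    ∃ t : ℕ → ℝ, (∀ k, 1 ≤ t k) ∧ Tendsto t atTop atTop ∧
      Tendsto (fun k => t k • h k) atTop (𝓝 (0 : E)) := by
  obtain ⟨B, hB⟩ := (𝓝 (0 : E)).exists_antitone_basis
  -- for each m, choose K m such that for k ≥ K m all j ≤ m scaled values are in B m
  have hev : ∀ m : ℕ, ∀ᶠ k in atTop, ∀ j ∈ Finset.range (m + 1), (j : ℝ) • h k ∈ B m := by
    intro m
    rw [Filter.eventually_all_finset]
    intro j _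
    have : Tendsto (fun k => (j : ℝ) • h k) atTop (𝓝 ((j : ℝ) • (0 : E))) := hh.const_smul _
    rw [smul_zero] at this
    exact this (hB.mem_of_mem trivial : B m ∈ 𝓝 0)
  choose K hK using fun m => (Filter.eventually_atTop.1 (hev m))
  set N : ℕ → ℕ := fun m => m + ∑ j ∈ Finset.range (m + 1), K j with hN
  have hNmono : StrictMono N := by
    intro a b hab
    have : ∑ j ∈ Finset.range (a + 1), K j ≤ ∑ j ∈ Finset.range (b + 1), K j :=
      Finset.sum_le_sum_of_subset (by
        intro x hx
        simp only [Finset.mem_range] at *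
        omega)
    simp only [hN]
    omega
  have hNK : ∀ m, K m ≤ N m := by
    intro m
    have : K m ≤ ∑ j ∈ Finset.range (m + 1), K j :=
      Finset.single_le_sum (f := K) (fun _ _ => Nat.zero_le _) (Finset.self_mem_range_succ m)
    simp only [hN]; omega
  have hNge : ∀ m, m ≤ N m := fun m => by simp only [hN]; omega
  set τ : ℕ → ℕ := fun k => Nat.findGreatest (fun m => N m ≤ k) k with hτ
  have hτ_ge : ∀ M k, N M ≤ k → M ≤ τ k := by
    intro M k hMk
    exact Nat.le_findGreatest ((hNge M).trans hMk) hMk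
  have hτ_spec : ∀ k, N 0 ≤ k → N (τ k) ≤ k := by
    intro k hk
    exact Nat.findGreatest_spec (P := fun m => N m ≤ k) (m := 0) (Nat.zero_le k) hk
  have hτ_tendsto : Tendsto τ atTop atTop := by
    rw [tendsto_atTop]
    intro M
    filter_upwards [eventually_ge_atTop (N M)] with k hk using hτ_ge M k hk
  refine ⟨fun k => ((max (τ k) 1 : ℕ) : ℝ), fun k => Nat.one_le_cast.2 (Nat.le_max_right _ 1),
    ?_, ?_⟩
  · refine tendsto_natCast_atTop_atTop.comp ?_
    exact tendsto_atTop_mono (fun k => Nat.le_max_left (τ k) 1) hτ_tendsto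
  · -- show (max (τ k) 1 : ℝ) • h k → 0
    rw [hB.1.tendsto_right_iff]
    intro m _
    filter_upwards [eventually_ge_atTop (N (max m 1)), eventually_ge_atTop (N 0)] with k hk hk0
    have hτk : max m 1 ≤ τ k := hτ_ge _ k hk
    have h1τ : 1 ≤ τ k := le_trans (le_max_right m 1) hτk
    have hmax : max (τ k) 1 = τ k := max_eq_left h1τ
    have hNτ : N (τ k) ≤ k := hτ_spec k hk0
    have hKτ : K (τ k) ≤ k := (hNK (τ k)).trans hNτ
    have := hK (τ k) k hKτ (τ k) (Finset.self_mem_range_succ (τ k))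
    rw [hmax]
    exact hB.2 (le_trans (le_max_left m 1) hτk) this

-- sum of (-1)^card over all subsets of a nonempty fintype is zero
lemma sum_neg_one_pow_card_eq_zero {α : Type*} [Fintype α] [DecidableEq α] [Nonempty α] :
    ∑ s : Finset α, (-1 : ℝ) ^ s.card = 0 := by
  have h := Finset.sum_powerset_neg_one_pow_card (α := α) (x := Finset.univ)
  have huniv : (Finset.univ : Finset α) ≠ ∅ := Finset.univ_nonempty.ne_empty
  rw [if_neg huniv] at h
  have h2 : ∑ s ∈ (Finset.univ : Finset α).powerset, (-1 : ℝ) ^ s.card = 0 := by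
    exact_mod_cast congrArg (fun z : ℤ => (z : ℝ)) h
  rw [Finset.powerset_univ] at h2
  simpa using h2

lemma sum_neg_one_pow_compl_card_eq_zero {α : Type*} [Fintype α] [DecidableEq α] [Nonempty α] :
    ∑ s : Finset α, (-1 : ℝ) ^ sᶜ.card = 0 := by
  rw [← sum_neg_one_pow_card_eq_zero (α := α)]
  exact Finset.sum_nbij' (fun s => sᶜ) (fun s => sᶜ) (fun _ _ => Finset.mem_univ _)
    (fun _ _ => Finset.mem_univ _) (fun s _ => compl_compl s)
    (fun s _ => compl_compl s) (fun s _ => rfl)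

lemma multilinear_continuous_of_continuousAt {n : ℕ} {E V : Type*}
    [AddCommGroup E] [Module ℝ E] [TopologicalSpace E] [IsTopologicalAddGroup E]
    [ContinuousSMul ℝ E] [FirstCountableTopology E]
    [AddCommGroup V] [Module ℝ V] [TopologicalSpace V] [IsTopologicalAddGroup V]
    [ContinuousSMul ℝ V]
    (f : MultilinearMap ℝ (fun _ : Fin n => E) V) {x₀ : Fin n → E}
    (hx : ContinuousAt f x₀) : Continuous f := by
  rcases Nat.eq_zero_or_pos n with hn | hn
  · subst hn
    have : ∀ m : Fin 0 → E, f m = f x₀ := fun m => congrArg f (Subsingleton.elim _ _)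
    exact (continuous_const (y := f x₀)).congr fun m => (this m).symm
  have : Nonempty (Fin n) := ⟨⟨0, hn⟩⟩
  classical
  -- Step A : continuity at 0
  have hexp : ∀ h : Fin n → E,
      f h = ∑ s : Finset (Fin n), (-1 : ℝ) ^ sᶜ.card • f (s.piecewise (x₀ + h) x₀) := by
    intro h
    have h1 : f ((x₀ + h) + (-x₀)) =
        ∑ s : Finset (Fin n), f (s.piecewise (x₀ + h) (-x₀)) := f.map_add_univ _ _
    have h2 : ∀ s : Finset (Fin n),
        f (s.piecewise (x₀ + h) (-x₀)) = (-1 : ℝ) ^ sᶜ.card • f (s.piecewise (x₀ + h) x₀) := by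
      intro s
      have h3 := f.map_piecewise_smul (fun _ => (-1 : ℝ)) (s.piecewise (x₀ + h) x₀) sᶜ
      rw [Finset.prod_const] at h3
      rw [← h3]
      congr 1
      funext i
      by_cases hi : i ∈ s
      · simp [Finset.piecewise, hi]
      · simp [Finset.piecewise, hi]
    calc f h = f ((x₀ + h) + (-x₀)) := by congr 1; abel
      _ = _ := by rw [h1]; exact Finset.sum_congr rfl fun s _ => h2 s
  have hx0 : ContinuousAt f 0 := by
    have hf0 : f 0 = 0 := f.map_zero
    rw [ContinuousAt, hf0]
    have hsum : Tendsto
        (fun h : Fin n → E => ∑ s : Finset (Fin n),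
          (-1 : ℝ) ^ sᶜ.card • f (s.piecewise (x₀ + h) x₀)) (𝓝 0)
        (𝓝 (∑ s : Finset (Fin n), (-1 : ℝ) ^ sᶜ.card • f x₀)) := by
      refine tendsto_finset_sum _ fun s _ => ?_
      refine Tendsto.const_smul ?_ _
      have harg : Tendsto (fun h : Fin n → E => s.piecewise (x₀ + h) x₀) (𝓝 0) (𝓝 x₀) := by
        have hc : Continuous fun h : Fin n → E => s.piecewise (x₀ + h) x₀ := by
          refine continuous_pi fun i => ?_
          by_cases hi : i ∈ s
          · simp only [Finset.piecewise, hi, if_true]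
            exact (continuous_const.add (continuous_apply i))
          · simp only [Finset.piecewise, hi, if_false]
            exact continuous_const
        have := hc.tendsto 0
        simpa [Finset.piecewise_same] using this
      exact hx.tendsto.comp harg
    have hzero : (∑ s : Finset (Fin n), (-1 : ℝ) ^ sᶜ.card • f x₀) = 0 := by
      rw [← Finset.sum_smul, sum_neg_one_pow_compl_card_eq_zero, zero_smul]
    rw [hzero] at hsum
    exact hsum.congr fun h => (hexp h).symm
  -- Step B : global continuity via sequences
  rw [continuous_iff_seqContinuous]
  intro u x hu
  have hdiff : Tendsto (fun k => u k - x) atTop (𝓝 0) := by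
    simpa using hu.sub (tendsto_const_nhds (x := x))
  obtain ⟨t, ht1, htop, hts⟩ := exists_smul_tendsto_zero hdiff
  have htpos : ∀ k, (0 : ℝ) < t k := fun k => lt_of_lt_of_le zero_lt_one (ht1 k)
  have key : ∀ s : Finset (Fin n), s ≠ Finset.univ →
      Tendsto (fun k => f (s.piecewise x (u k - x))) atTop (𝓝 0) := by
    intro s hs
    rcases eq_or_ne s ∅ with hse | hse
    · subst hse
      have : ∀ k, f ((∅ : Finset (Fin n)).piecewise x (u k - x)) = f (u k - x) := fun k => by
        rw [Finset.piecewise_empty]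
      refine (Tendsto.congr (fun k => (this k).symm)) ?_
      have := hx0.tendsto.comp hdiff
      simpa [Function.comp_def, f.map_zero] using this
    · -- s nonempty, s ≠ univ
      have hcs : 0 < sᶜ.card := by
        refine Finset.card_pos.2 ?_
        rcases Finset.eq_empty_or_nonempty sᶜ with h | h
        · exfalso; apply hs
          rw [← compl_compl s, h, Finset.compl_empty]
        · exact h
      have hds : 0 < s.card := Finset.card_pos.2 (Finset.nonempty_iff_ne_empty.2 hse)
      set c : ℝ := (sᶜ.card : ℝ) with hc
      set d : ℝ := (s.card : ℝ) with hd
      set r : ℕ → ℝ := fun k => t k ^ (-(c / d)) with hr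
      have hrpos : ∀ k, 0 < r k := fun k => Real.rpow_pos_of_pos (htpos k) _
      have heq : ∀ k, f (s.piecewise x (u k - x)) =
          f (fun i => if i ∈ s then r k • x i else t k • (u k - x) i) := by
        intro k
        set m : Fin n → E := s.piecewise (fun i => r k • x i) (u k - x) with hm
        have e1 : (fun i => if i ∈ s then r k • x i else t k • (u k - x) i) =
            sᶜ.piecewise (fun i => t k • m i) m := by
          funext i
          by_cases hi : i ∈ s
          · simp [Finset.piecewise, hm, hi]
          · simp [Finset.piecewise, hm, hi]
        have e2 := f.map_piecewise_smul (fun _ => t k) m sᶜ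
        rw [Finset.prod_const] at e2
        have e3 := f.map_piecewise_smul (fun _ => r k) (s.piecewise x (u k - x)) s
        rw [Finset.prod_const] at e3
        have e4 : s.piecewise (fun i => r k • (s.piecewise x (u k - x)) i)
            (s.piecewise x (u k - x)) = m := by
          funext i
          by_cases hi : i ∈ s
          · simp [Finset.piecewise, hm, hi]
          · simp [Finset.piecewise, hm, hi]
        rw [e4] at e3
        have hscal : t k ^ sᶜ.card * r k ^ s.card = 1 := by
          have htk := htpos k
          rw [hr, ← Real.rpow_natCast (t k) sᶜ.card,
            ← Real.rpow_natCast (t k ^ (-(c / d))) s.card, ← Real.rpow_mul htk.le,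
            ← Real.rpow_add htk]
          have hdne : d ≠ 0 := Nat.cast_ne_zero.2 hds.ne'
          have : (c : ℝ) + -(c / d) * (s.card : ℕ) = 0 := by
            rw [← hd]
            field_simp
            ring
          rw [show ((sᶜ.card : ℕ) : ℝ) = c from rfl, this, Real.rpow_zero]
        rw [e1, e2, e3, smul_smul, hscal, one_smul]
      have hargs : Tendsto (fun k => (fun i => if i ∈ s then r k • x i else t k • (u k - x) i))
          atTop (𝓝 (0 : Fin n → E)) := by
        rw [tendsto_pi_nhds]
        intro i
        by_cases hi : i ∈ s
        · simp only [hi, if_true]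
          have hr0 : Tendsto r atTop (𝓝 0) := by
            have := (tendsto_rpow_neg_atTop (y := c / d) (div_pos (Nat.cast_pos.2 hcs) (Nat.cast_pos.2 hds))).comp htop
            exact this
          have := hr0.smul_const (x i)
          simpa using this
        · simp only [hi, if_false]
          have : Tendsto (fun k => (t k • (u k - x)) i) atTop (𝓝 ((0 : Fin n → E) i)) :=
            (tendsto_pi_nhds.1 hts) i
          simpa using this
      have := hx0.tendsto.comp hargs
      rw [f.map_zero] at this
      exact (this.congr fun k => (heq k).symm)
  -- combine
  have hexp2 : ∀ k, f (u k) = ∑ s : Finset (Fin n), f (s.piecewise x (u k - x)) := by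
    intro k
    have h1 : f (u k) = f (x + (u k - x)) := by congr 1; abel
    rw [h1, f.map_add_univ]
  have hsum : Tendsto (fun k => ∑ s : Finset (Fin n), f (s.piecewise x (u k - x))) atTop
      (𝓝 (∑ s : Finset (Fin n), if s = Finset.univ then f x else 0)) := by
    refine tendsto_finset_sum _ fun s _ => ?_
    rcases eq_or_ne s Finset.univ with hs | hs
    · subst hs
      simp only [if_true]
      have : ∀ k, (Finset.univ : Finset (Fin n)).piecewise x (u k - x) = x := fun k =>
        Finset.piecewise_univ _ _
      simp only [this]
      exact tendsto_const_nhds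
    · rw [if_neg hs]
      exact key s hs
  have hval : (∑ s : Finset (Fin n), if s = Finset.univ then f x else 0) = f x := by
    rw [Finset.sum_ite_eq' Finset.univ]
    simp
  rw [hval] at hsum
  exact hsum.congr fun k => (hexp2 k).symm

section DerAt

variable {G : Type*} [Group G] [TopologicalSpace G] [IsTopologicalGroup G]
  {g : Type*} [AddCommGroup g] [Module ℝ g] [TopologicalSpace g] [ContinuousSMul ℝ g]
  {V : Type*} [AddCommGroup V] [Module ℝ V] [TopologicalSpace V]
  [IsTopologicalAddGroup V] [ContinuousSMul ℝ V]

/-- The derived-representation difference quotient converges. -/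
def DerAt (E : ExpLieGroup G g) (π : Representation ℝ G V) (x : g) (w D : V) : Prop :=
  Tendsto (fun t : ℝ => t⁻¹ • (π (E.exp (t • x)) w - w)) (𝓝[≠] (0 : ℝ)) (𝓝 D)

lemma derAt_zero (E : ExpLieGroup G g) (π : Representation ℝ G V) (w : V) :
    DerAt E π 0 w 0 := by
  have : ∀ t : ℝ, t⁻¹ • (π (E.exp (t • (0 : g))) w - w) = 0 := by
    intro t
    rw [smul_zero, E.exp_zero, map_one]
    simp
  unfold DerAt
  simp only [this]
  exact tendsto_const_nhds

lemma derAt_smul (E : ExpLieGroup G g) (π : Representation ℝ G V) {x : g} {w D : V}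
    (c : ℝ) (h : DerAt E π x w D) : DerAt E π (c • x) w (c • D) := by
  rcases eq_or_ne c 0 with rfl | hc
  · simpa using derAt_zero E π w
  · unfold DerAt at h ⊢
    have hmap : Tendsto (fun t : ℝ => c * t) (𝓝[≠] (0 : ℝ)) (𝓝[≠] (0 : ℝ)) := by
      apply tendsto_nhdsWithin_of_tendsto_nhds_of_eventually_within
      · have : Tendsto (fun t : ℝ => c * t) (𝓝 0) (𝓝 (c * 0)) :=
          (continuous_const.mul continuous_id).tendsto 0
        rw [mul_zero] at this
        exact this.mono_left nhdsWithin_le_nhds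
      · filter_upwards [self_mem_nhdsWithin] with t ht
        exact mul_ne_zero hc ht
    have hcomp : Tendsto (fun t : ℝ => c • ((c * t)⁻¹ • (π (E.exp ((c * t) • x)) w - w)))
        (𝓝[≠] (0 : ℝ)) (𝓝 (c • D)) := ((h.comp hmap).const_smul c)
    refine hcomp.congr' ?_
    filter_upwards [self_mem_nhdsWithin] with t ht
    have h1 : (c * t) • x = t • (c • x) := by
      rw [smul_smul, mul_comm]
    rw [h1, smul_smul, mul_inv, ← mul_assoc, mul_inv_cancel₀ hc, one_mul]

lemma derAt_add_vec (E : ExpLieGroup G g) (π : Representation ℝ G V) {x : g}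
    {w₁ w₂ D₁ D₂ : V} (h₁ : DerAt E π x w₁ D₁) (h₂ : DerAt E π x w₂ D₂) :
    DerAt E π x (w₁ + w₂) (D₁ + D₂) := by
  unfold DerAt at h₁ h₂ ⊢
  have := h₁.add h₂
  refine this.congr fun t => ?_
  rw [map_add, ← smul_add]
  congr 1
  abel

lemma derAt_smul_vec (E : ExpLieGroup G g) (π : Representation ℝ G V) {x : g}
    {w D : V} (c : ℝ) (h : DerAt E π x w D) : DerAt E π x (c • w) (c • D) := by
  unfold DerAt at h ⊢
  have := h.const_smul c
  refine this.congr fun t => ?_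
  rw [map_smul, smul_comm, smul_sub]

end DerAt

section Main

variable {G : Type*} [Group G] [TopologicalSpace G] [IsTopologicalGroup G]
  {g : Type*} [AddCommGroup g] [Module ℝ g] [TopologicalSpace g] [ContinuousSMul ℝ g]
  {V : Type*} [AddCommGroup V] [Module ℝ V] [TopologicalSpace V]
  [IsTopologicalAddGroup V] [ContinuousSMul ℝ V] [LocallyConvexSpace ℝ V]

/-- closed convex neighbourhoods of `0` form a basis in a locally convex space. -/
lemma exists_closed_convex_nhds (W : Set V) (hW : W ∈ 𝓝 (0 : V)) :
    ∃ C, C ∈ 𝓝 (0 : V) ∧ IsClosed C ∧ Convex ℝ C ∧ C ⊆ W := by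
  obtain ⟨D, ⟨hD, hDclosed⟩, hDW⟩ := (closed_nhds_basis (0 : V)).mem_iff.1 hW
  obtain ⟨C0, ⟨hC0, hC0conv⟩, hC0D⟩ :=
    (LocallyConvexSpace.convex_basis_zero ℝ V).mem_iff.1 hD
  refine ⟨closure C0, mem_of_superset hC0 subset_closure, isClosed_closure,
    hC0conv.closure, ?_⟩
  calc closure C0 ⊆ closure D := closure_mono hC0D
    _ = D := hDclosed.closure_eq
    _ ⊆ W := hDW

lemma derAt_add_arg (E : ExpLieGroup G g) (hE : E.HasTrotter)
    (π : Representation ℝ G V) (hπ : Continuous fun p : G × V => π p.1 p.2)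
    {x y : g} {w Dx Dy : V} (hx : DerAt E π x w Dx) (hy : DerAt E π y w Dy) :
    Tendsto (fun t : ℝ => t⁻¹ • (π (E.exp (t • (x + y))) w - w)) (𝓝[≠] (0 : ℝ))
      (𝓝 (Dx + Dy)) := by
  have hexp_cont : ∀ z : g, Tendsto (fun s : ℝ => E.exp (s • z)) (𝓝 0) (𝓝 1) := by
    intro z
    have h1 : Tendsto (fun s : ℝ => s • z) (𝓝 0) (𝓝 ((0 : ℝ) • z)) :=
      (continuous_id.smul continuous_const).tendsto 0
    rw [zero_smul] at h1
    have := (E.continuous_exp.tendsto 0).comp h1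
    rwa [E.exp_zero] at this
  set b : V := Dx + Dy with hb
  rw [← tendsto_sub_nhds_zero_iff, tendsto_def]
  intro W hW
  obtain ⟨C, hCnhds, hCclosed, hCconv, hCW⟩ := exists_closed_convex_nhds W hW
  refine mem_of_superset ?_ (fun t ht => hCW ht)
  show {t : ℝ | t⁻¹ • (π (E.exp (t • (x + y))) w - w) - b ∈ C} ∈ 𝓝[≠] (0 : ℝ)
  rw [← eventually_iff]
  have hCb : {v : V | v - b ∈ C} ∈ 𝓝 b := by
    have h1 : Tendsto (fun v : V => v - b) (𝓝 b) (𝓝 (b - b)) :=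
      (continuous_id.sub continuous_const).tendsto b
    rw [sub_self] at h1
    exact h1 hCnhds
  have hcont : Tendsto (fun p : G × V => π p.1 p.2) (𝓝 ((1 : G), b)) (𝓝 b) := by
    have := hπ.tendsto ((1 : G), b)
    simpa using this
  obtain ⟨P, hP, B, hB, hPB⟩ := mem_nhds_prod_iff.1 (hcont hCb)
  obtain ⟨U₂, hU₂, hsplit⟩ := exists_nhds_one_split hP
  obtain ⟨N₀, hN₀⟩ := hE x y (Icc (-1 : ℝ) 1) isCompact_Icc U₂ hU₂
  obtain ⟨δ, hδpos, hδ⟩ := Metric.eventually_nhds_iff.1 ((hexp_cont (x + y)) hU₂)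
  set δ' : ℝ := min δ 1 with hδ'
  have hδ'pos : 0 < δ' := lt_min hδpos one_pos
  have habs : ∀ᶠ t in 𝓝[≠] (0 : ℝ), |t| < δ' := by
    apply eventually_nhdsWithin_of_eventually_nhds
    have h1 : Tendsto (fun t : ℝ => |t|) (𝓝 0) (𝓝 |0|) := continuous_abs.tendsto 0
    rw [abs_zero] at h1
    exact h1 (Iio_mem_nhds hδ'pos)
  filter_upwards [habs, self_mem_nhdsWithin] with t htabs htne
  have htabs1 : |t| < 1 := lt_of_lt_of_le htabs (min_le_right _ _)
  have htabsδ : |t| < δ := lt_of_lt_of_le htabs (min_le_left _ _)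
  set gseq : ℕ → G := fun n => E.exp ((t / n) • x) * E.exp ((t / n) • y) with hgseq
  set bseq : ℕ → V := fun n => ((t / n)⁻¹ : ℝ) • (π (gseq n) w - w) with hbseq
  -- the sequence t / n tends to 0 within ≠ 0
  have hs0' : Tendsto (fun n : ℕ => t / n) atTop (𝓝 (0 : ℝ)) := by
    have h1 : Tendsto (fun n : ℕ => t * (n : ℝ)⁻¹) atTop (𝓝 (t * 0)) :=
      tendsto_const_nhds.mul (tendsto_natCast_atTop_atTop (R := ℝ)).inv_tendsto_atTop
    rw [mul_zero] at h1
    exact h1.congr fun n => by rw [div_eq_mul_inv]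
  have hs0 : Tendsto (fun n : ℕ => t / n) atTop (𝓝[≠] (0 : ℝ)) := by
    apply tendsto_nhdsWithin_of_tendsto_nhds_of_eventually_within _ hs0'
    filter_upwards [eventually_ge_atTop 1] with n hn
    have hnne : (n : ℝ) ≠ 0 := Nat.cast_ne_zero.2 (by omega)
    exact div_ne_zero htne hnne
  -- Claim 1 : bseq → b
  have hbseq_tendsto : Tendsto bseq atTop (𝓝 b) := by
    have hterm1 : Tendsto (fun s : ℝ =>
        π (E.exp (s • x)) (s⁻¹ • (π (E.exp (s • y)) w - w))) (𝓝[≠] (0 : ℝ)) (𝓝 Dy) := by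
      have hpair : Tendsto (fun s : ℝ =>
          ((E.exp (s • x) : G), s⁻¹ • (π (E.exp (s • y)) w - w))) (𝓝[≠] (0 : ℝ))
          (𝓝 ((1 : G), Dy)) :=
        Tendsto.prodMk_nhds ((hexp_cont x).mono_left nhdsWithin_le_nhds) hy
      have hπDy : Tendsto (fun p : G × V => π p.1 p.2) (𝓝 ((1 : G), Dy)) (𝓝 Dy) := by
        have := hπ.tendsto ((1 : G), Dy)
        simpa using this
      exact hπDy.comp hpair
    have hF : Tendsto (fun s : ℝ =>
        π (E.exp (s • x)) (s⁻¹ • (π (E.exp (s • y)) w - w)) + s⁻¹ • (π (E.exp (s • x)) w - w))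
        (𝓝[≠] (0 : ℝ)) (𝓝 (Dy + Dx)) := hterm1.add hx
    have hcomp := hF.comp hs0
    rw [hb, show Dx + Dy = Dy + Dx from add_comm _ _]
    refine hcomp.congr' ?_
    filter_upwards [eventually_ge_atTop 1] with n hn
    have hnne : (n : ℝ) ≠ 0 := Nat.cast_ne_zero.2 (by omega)
    have hsne : t / (n : ℝ) ≠ 0 := div_ne_zero htne hnne
    set s : ℝ := t / n with hs
    show π (E.exp (s • x)) (s⁻¹ • (π (E.exp (s • y)) w - w)) + s⁻¹ • (π (E.exp (s • x)) w - w)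
        = bseq n
    have hmul : π (gseq n) w = π (E.exp (s • x)) (π (E.exp (s • y)) w) := by
      rw [hgseq]
      show π (E.exp ((t / ↑n) • x) * E.exp ((t / ↑n) • y)) w = _
      rw [map_mul]
      rfl
    rw [hbseq]
    show π (E.exp (s • x)) (s⁻¹ • (π (E.exp (s • y)) w - w)) + s⁻¹ • (π (E.exp (s • x)) w - w)
        = s⁻¹ • (π (gseq n) w - w)
    rw [hmul, map_smul, map_sub]
    rw [← smul_add]
    congr 1
    abel
  -- Claim 2 : π ((gseq n)^n) w → π (exp (t(x+y))) w
  have hgn : Tendsto (fun n : ℕ => (gseq n) ^ n) atTop (𝓝 (E.exp (t • (x + y)))) := by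
    rw [tendsto_def]
    intro U hU
    set h₀ : G := E.exp (t • (x + y)) with hh₀
    have hU₀ : (fun u : G => h₀ * u) ⁻¹' U ∈ 𝓝 (1 : G) := by
      have h1 : Tendsto (fun u : G => h₀ * u) (𝓝 1) (𝓝 (h₀ * 1)) :=
        (continuous_const.mul continuous_id).tendsto 1
      rw [mul_one] at h1
      exact h1 hU
    obtain ⟨N, hN⟩ := hE x y {t} isCompact_singleton _ hU₀
    rw [mem_atTop_sets]
    refine ⟨N, fun n hn => ?_⟩
    have h2 := hN n hn t rfl
    rw [Set.mem_preimage, mul_inv_cancel_left] at h2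
    show (gseq n) ^ n ∈ U
    exact h2
  -- continuous evaluation against w
  have hev : Continuous fun h : G => t⁻¹ • (π h w - w) := by
    have h1 : Continuous fun h : G => π h w :=
      hπ.comp (continuous_id.prodMk continuous_const)
    exact (h1.sub continuous_const).const_smul _
  have hzt : Tendsto (fun n : ℕ => t⁻¹ • (π ((gseq n) ^ n) w - w)) atTop
      (𝓝 (t⁻¹ • (π (E.exp (t • (x + y))) w - w))) := (hev.tendsto _).comp hgn
  -- Claim 3 : the telescoping identity
  have key : ∀ n : ℕ, 1 ≤ n → t⁻¹ • (π ((gseq n) ^ n) w - w)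
      = ((n : ℝ))⁻¹ • ∑ k ∈ Finset.range n, π ((gseq n) ^ k) (bseq n) := by
    intro n hn
    have hnne : (n : ℝ) ≠ 0 := Nat.cast_ne_zero.2 (by omega)
    have hsne : t / (n : ℝ) ≠ 0 := div_ne_zero htne hnne
    have h2 : π (gseq n) w - w = (t / n) • bseq n := by
      rw [hbseq, smul_smul, mul_inv_cancel₀ hsne, one_smul]
    have htele : ∑ k ∈ Finset.range n,
        (π ((gseq n) ^ (k + 1)) w - π ((gseq n) ^ k) w) = π ((gseq n) ^ n) w - w := by
      rw [Finset.sum_range_sub (fun k => π ((gseq n) ^ k) w) n]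
      congr 1
      rw [pow_zero, map_one]
      rfl
    have hstep : ∀ k : ℕ, π ((gseq n) ^ (k + 1)) w - π ((gseq n) ^ k) w
        = (t / n) • π ((gseq n) ^ k) (bseq n) := by
      intro k
      have hpow : π ((gseq n) ^ (k + 1)) w = π ((gseq n) ^ k) (π (gseq n) w) := by
        rw [pow_succ, map_mul]
        rfl
      rw [hpow, ← map_sub, h2, map_smul]
    rw [← htele]
    have : ∑ k ∈ Finset.range n, (π ((gseq n) ^ (k + 1)) w - π ((gseq n) ^ k) w)
        = (t / n) • ∑ k ∈ Finset.range n, π ((gseq n) ^ k) (bseq n) := by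
      rw [Finset.smul_sum]
      exact Finset.sum_congr rfl fun k _ => hstep k
    rw [this, smul_smul]
    congr 1
    rw [div_eq_mul_inv, ← mul_assoc, inv_mul_cancel₀ htne, one_mul]
  -- Claim 4 : eventual membership of averages in b + C
  have hgseq1 : Tendsto gseq atTop (𝓝 (1 : G)) := by
    have h1 : Tendsto (fun n : ℕ => E.exp ((t / n) • x)) atTop (𝓝 1) :=
      (hexp_cont x).comp hs0'
    have h2 : Tendsto (fun n : ℕ => E.exp ((t / n) • y)) atTop (𝓝 1) :=
      (hexp_cont y).comp hs0'
    have := h1.mul h2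
    rwa [mul_one] at this
  have hsmall_all : ∀ᶠ n in atTop, ∀ k ∈ Finset.range N₀, (gseq n) ^ k ∈ P := by
    rw [eventually_all_finset]
    intro k _
    have h1 : Tendsto (fun n : ℕ => (gseq n) ^ k) atTop (𝓝 ((1 : G) ^ k)) :=
      ((continuous_pow k).tendsto _).comp hgseq1
    rw [one_pow] at h1
    exact h1 hP
  have hbig : ∀ n : ℕ, ∀ k : ℕ, N₀ ≤ k → 1 ≤ k → k ≤ n → (gseq n) ^ k ∈ P := by
    intro n k hk hk1 hkn
    have hkne : (k : ℝ) ≠ 0 := Nat.cast_ne_zero.2 (by omega)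
    have hnne : (n : ℝ) ≠ 0 := Nat.cast_ne_zero.2 (by omega)
    have hnpos : (0 : ℝ) < n := by positivity
    set s : ℝ := (k * t) / n with hs
    have hsabs : |s| ≤ |t| := by
      rw [hs, abs_div, abs_mul, Nat.abs_cast, abs_of_pos hnpos, div_le_iff₀ hnpos]
      have hkn' : (k : ℝ) ≤ (n : ℝ) := Nat.cast_le.2 hkn
      nlinarith [abs_nonneg t]
    have hsmem : s ∈ Icc (-1 : ℝ) 1 := by
      rw [mem_Icc, ← abs_le]
      exact hsabs.trans htabs1.le
    have htr := hN₀ k hk s hsmem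
    have hsk : s / k = t / n := by
      rw [hs]
      field_simp
    rw [hsk] at htr
    have hexpU₂ : E.exp (s • (x + y)) ∈ U₂ := by
      apply hδ
      rw [Real.dist_eq, sub_zero]
      exact lt_of_le_of_lt hsabs htabsδ
    have : (gseq n) ^ k = E.exp (s • (x + y)) *
        ((E.exp (s • (x + y)))⁻¹ * (E.exp ((t / n) • x) * E.exp ((t / n) • y)) ^ k) := by
      rw [mul_inv_cancel_left]
    rw [this]
    exact hsplit _ hexpU₂ _ htr
  have hbB : ∀ᶠ n in atTop, bseq n ∈ B := hbseq_tendsto hB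
  have hmem : ∀ᶠ n : ℕ in atTop, ((n : ℝ))⁻¹ • (∑ k ∈ Finset.range n,
      π ((gseq n) ^ k) (bseq n)) - b ∈ C := by
    filter_upwards [hsmall_all, hbB, eventually_ge_atTop 1] with n hsm hbn hn1
    have hnne : (n : ℝ) ≠ 0 := Nat.cast_ne_zero.2 (by omega)
    have hterm : ∀ k ∈ Finset.range n, π ((gseq n) ^ k) (bseq n) - b ∈ C := by
      intro k hk
      rw [Finset.mem_range] at hk
      have hgP : (gseq n) ^ k ∈ P := by
        by_cases hcase : k < N₀
        · exact hsm k (Finset.mem_range.2 hcase)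
        · rcases Nat.eq_zero_or_pos k with rfl | hkpos
          · rw [pow_zero]
            exact mem_of_mem_nhds hP
          · exact hbig n k (le_of_not_gt hcase) hkpos (le_of_lt hk)
      have := hPB (Set.mk_mem_prod hgP hbn)
      exact this
    have havg : ∑ k ∈ Finset.range n,
        ((n : ℝ))⁻¹ • (π ((gseq n) ^ k) (bseq n) - b) ∈ C := by
      refine hCconv.sum_mem (fun k _ => by positivity) ?_ hterm
      rw [Finset.sum_const, Finset.card_range, nsmul_eq_mul]
      field_simp
    have heq : ∑ k ∈ Finset.range n, ((n : ℝ))⁻¹ • (π ((gseq n) ^ k) (bseq n) - b)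
        = ((n : ℝ))⁻¹ • (∑ k ∈ Finset.range n, π ((gseq n) ^ k) (bseq n)) - b := by
      rw [← Finset.smul_sum, Finset.sum_sub_distrib, Finset.sum_const, Finset.card_range,
        smul_sub]
      congr 1
      rw [← Nat.cast_smul_eq_nsmul ℝ n b, smul_smul, inv_mul_cancel₀ hnne, one_smul]
    rwa [heq] at havg
  -- Claim 5 : take the limit
  have hSn : Tendsto (fun n : ℕ => ((n : ℝ))⁻¹ • (∑ k ∈ Finset.range n,
      π ((gseq n) ^ k) (bseq n)) - b) atTop
      (𝓝 (t⁻¹ • (π (E.exp (t • (x + y))) w - w) - b)) := by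
    refine Tendsto.sub ?_ tendsto_const_nhds
    refine hzt.congr' ?_
    filter_upwards [eventually_ge_atTop 1] with n hn using key n hn
  exact hCclosed.mem_of_tendsto hSn hmem

end Main

/-- **Lemma 4.8.** Let `(π, V)` be a continuous representation of the Fréchet–Lie group
`G` with the Trotter property on a metrizable locally convex space `V`.  For `v ∈ Dⁿ`,
the iterated derived operators are recorded by the family `Φ`:
`Φ 0 = v` and `Φ (m+1) (x ::ᵥ xs) = d̄π(x) (Φ m xs)` for `m < n`.  Then the map
`ω_vⁿ = Φ n : 𝔤ⁿ → V`, `(x₁, …, xₙ) ↦ d̄π(x₁) ⋯ d̄π(xₙ) v`, is continuous and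
`n`-linear in each argument. -/
theorem iterated_derived_representation_continuous_multilinear
    {G : Type*} [Group G] [TopologicalSpace G] [IsTopologicalGroup G] [T2Space G]
    -- `g` is a Fréchet space:
    {g : Type*} [AddCommGroup g] [Module ℝ g] [UniformSpace g] [IsUniformAddGroup g]
    [ContinuousSMul ℝ g] [LocallyConvexSpace ℝ g] [CompleteSpace g]
    [TopologicalSpace.MetrizableSpace g]
    -- `V` is a metrizable locally convex space:
    {V : Type*} [AddCommGroup V] [Module ℝ V] [TopologicalSpace V]
    [IsTopologicalAddGroup V] [ContinuousSMul ℝ V] [LocallyConvexSpace ℝ V]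
    [TopologicalSpace.MetrizableSpace V] [T2Space V]
    (E : ExpLieGroup G g) (hE : E.HasTrotter)
    (π : Representation ℝ G V)
    (hπ : Continuous fun p : G × V => π p.1 p.2)
    (n : ℕ) (v : V)
    (Φ : (m : ℕ) → (Fin m → g) → V)
    (hΦ0 : ∀ xs : Fin 0 → g, Φ 0 xs = v)
    (hΦder : ∀ m < n, ∀ (x : g) (xs : Fin m → g),
      Tendsto (fun t : ℝ => t⁻¹ • (π (E.exp (t • x)) (Φ m xs) - Φ m xs))
        (𝓝[≠] (0 : ℝ)) (𝓝 (Φ (m + 1) (Fin.cons x xs)))) :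
    Continuous (Φ n) ∧
      (∀ (xs : Fin n → g) (i : Fin n) (a b : g),
        Φ n (Function.update xs i (a + b)) =
          Φ n (Function.update xs i a) + Φ n (Function.update xs i b)) ∧
      (∀ (xs : Fin n → g) (i : Fin n) (c : ℝ) (a : g),
        Φ n (Function.update xs i (c • a)) = c • Φ n (Function.update xs i a)) := by
  classical
  revert hΦder
  induction n with
  | zero =>
      intro hΦder
      refine ⟨(continuous_const (y := v)).congr fun xs => (hΦ0 xs).symm, ?_, ?_⟩
      · intro xs i; exact i.elim0
      · intro xs i; exact i.elim0
  | succ n IH =>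
      intro hΦder
      obtain ⟨hc, hadd, hsmul⟩ := IH fun m hm => hΦder m (Nat.lt_succ_of_lt hm)
      have hder : ∀ (x : g) (ys : Fin n → g),
          DerAt E π x (Φ n ys) (Φ (n + 1) (Fin.cons x ys)) :=
        fun x ys => hΦder n (Nat.lt_succ_self n) x ys
      have huniq : ∀ {x : g} {w D₁ D₂ : V}, DerAt E π x w D₁ → DerAt E π x w D₂ → D₁ = D₂ :=
        fun h1 h2 => tendsto_nhds_unique h1 h2
      -- update/cons bookkeeping
      have hupd0 : ∀ (xs : Fin (n + 1) → g) (c : g),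
          Function.update xs 0 c = Fin.cons c (Fin.tail xs) := by
        intro xs c
        funext j
        cases j using Fin.cases with
        | zero => simp
        | succ jj =>
            rw [Function.update_of_ne (Fin.succ_ne_zero jj), Fin.cons_succ]
            rfl
      have hupds : ∀ (xs : Fin (n + 1) → g) (j : Fin n) (c : g),
          Function.update xs j.succ c
            = Fin.cons (xs 0) (Function.update (Fin.tail xs) j c) := by
        intro xs j c
        funext i
        cases i using Fin.cases with
        | zero =>
            rw [Function.update_of_ne (Fin.succ_ne_zero j).symm, Fin.cons_zero]
        | succ ii =>
            rw [Fin.cons_succ]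
            by_cases h : ii = j
            · subst h
              rw [Function.update_self, Function.update_self]
            · rw [Function.update_of_ne (fun hcon => h (Fin.succ_injective _ hcon)),
                Function.update_of_ne h]
              rfl
      -- multilinearity
      have hmuladd : ∀ (xs : Fin (n + 1) → g) (i : Fin (n + 1)) (a b : g),
          Φ (n + 1) (Function.update xs i (a + b)) =
            Φ (n + 1) (Function.update xs i a) + Φ (n + 1) (Function.update xs i b) := by
        intro xs i a b
        induction i using Fin.cases with
        | zero =>
            rw [hupd0, hupd0, hupd0]
            exact huniq (hder (a + b) (Fin.tail xs))
              (derAt_add_arg E hE π hπ (hder a (Fin.tail xs)) (hder b (Fin.tail xs)))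
        | succ j =>
            rw [hupds, hupds, hupds]
            have h1 := hder (xs 0) (Function.update (Fin.tail xs) j (a + b))
            rw [hadd (Fin.tail xs) j a b] at h1
            exact huniq h1
              (derAt_add_vec E π (hder (xs 0) (Function.update (Fin.tail xs) j a))
                (hder (xs 0) (Function.update (Fin.tail xs) j b)))
      have hmulsmul : ∀ (xs : Fin (n + 1) → g) (i : Fin (n + 1)) (c : ℝ) (a : g),
          Φ (n + 1) (Function.update xs i (c • a)) =
            c • Φ (n + 1) (Function.update xs i a) := by
        intro xs i c a
        induction i using Fin.cases with
        | zero =>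
            rw [hupd0, hupd0]
            exact huniq (hder (c • a) (Fin.tail xs))
              (derAt_smul E π c (hder a (Fin.tail xs)))
        | succ j =>
            rw [hupds, hupds]
            have h1 := hder (xs 0) (Function.update (Fin.tail xs) j (c • a))
            rw [hsmul (Fin.tail xs) j c a] at h1
            exact huniq h1
              (derAt_smul_vec E π c (hder (xs 0) (Function.update (Fin.tail xs) j a)))
      -- continuity via a Baire category argument
      haveI hcg : (𝓤 g).IsCountablyGenerated :=
        IsUniformAddGroup.uniformity_countably_generated
      haveI hcg2 : (𝓤 (Fin (n + 1) → g)).IsCountablyGenerated := inferInstance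
      haveI : BaireSpace (Fin (n + 1) → g) :=
        inferInstance
      letI : MetricSpace V := TopologicalSpace.metrizableSpaceMetric V
      have hfc : ∀ k : ℕ, Continuous fun xs : Fin (n + 1) → g =>
          (k : ℝ) • (π (E.exp ((k : ℝ)⁻¹ • xs 0)) (Φ n (Fin.tail xs)) - Φ n (Fin.tail xs)) := by
        intro k
        have htail : Continuous fun xs : Fin (n + 1) → g => Fin.tail xs :=
          continuous_pi fun j => continuous_apply _
        have h0 : Continuous fun xs : Fin (n + 1) → g => E.exp ((k : ℝ)⁻¹ • xs 0) :=
          E.continuous_exp.comp ((continuous_apply (0 : Fin (n + 1))).const_smul _)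
        have hΦt : Continuous fun xs : Fin (n + 1) → g => Φ n (Fin.tail xs) := hc.comp htail
        exact ((hπ.comp (h0.prodMk hΦt)).sub hΦt).const_smul _
      have hptw : ∀ xs : Fin (n + 1) → g,
          Tendsto (fun k : ℕ => (k : ℝ) •
              (π (E.exp ((k : ℝ)⁻¹ • xs 0)) (Φ n (Fin.tail xs)) - Φ n (Fin.tail xs)))
            atTop (𝓝 (Φ (n + 1) xs)) := by
        intro xs
        have hseq : Tendsto (fun k : ℕ => (k : ℝ)⁻¹) atTop (𝓝[≠] (0 : ℝ)) := by
          apply tendsto_nhdsWithin_of_tendsto_nhds_of_eventually_within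
          · exact (tendsto_natCast_atTop_atTop (R := ℝ)).inv_tendsto_atTop
          · filter_upwards [eventually_ge_atTop 1] with k hk
            exact inv_ne_zero (Nat.cast_ne_zero.2 (by omega))
        have hcomp := (hder (xs 0) (Fin.tail xs)).comp hseq
        rw [Fin.cons_self_tail] at hcomp
        refine hcomp.congr' ?_
        filter_upwards [eventually_ge_atTop 1] with k hk
        show ((k : ℝ)⁻¹)⁻¹ • _ = _
        rw [inv_inv]
      obtain ⟨x₀, hx₀⟩ := baire_exists_continuousAt hfc hptw
      have hMc : Continuous (Φ (n + 1)) :=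
        multilinear_continuous_of_continuousAt
          ({ toFun := Φ (n + 1)
             map_update_add' := by
               intro inst xs i a b
               rw [Subsingleton.elim inst (instDecidableEqFin (n + 1))]
               exact hmuladd xs i a b
             map_update_smul' := by
               intro inst xs i c a
               rw [Subsingleton.elim inst (instDecidableEqFin (n + 1))]
               exact hmulsmul xs i c a } : MultilinearMap ℝ (fun _ : Fin (n + 1) => g) V)
          (x₀ := x₀) hx₀
      exact ⟨hMc, hmuladd, hmulsmul⟩
end

section
/- A pointwise limit of continuous functions from a Baire space into a metrizable space has a point of continuity; consequently, if 𝔤 is a Fréchet space, V metrizable locally convex, and ω : 𝔤ⁿ → V is an n-linear map that is the pointwise limit of a sequence of continuous maps Fₖ : 𝔤ⁿ → V, then ω is continuous. -/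
open Set Filter Topology
open Uniformity

set_option linter.unusedSectionVars false

/-- **Osgood's theorem**: a pointwise limit of continuous functions from a Baire space
into a pseudometric space has a point of continuity. -/
theorem osgood_exists_continuousAt {X Y : Type*} [TopologicalSpace X] [BaireSpace X]
    [Nonempty X] [PseudoMetricSpace Y] (f : X → Y) (F : ℕ → X → Y)
    (hF : ∀ k, Continuous (F k)) (hlim : ∀ x, Tendsto (fun k => F k x) atTop (𝓝 (f x))) :
    ∃ x, ContinuousAt f x := by
  set G : ℝ → Set X := fun ε =>
    {x | ∃ U : Set X, IsOpen U ∧ x ∈ U ∧ ∀ y ∈ U, ∀ z ∈ U, dist (f y) (f z) ≤ ε} with hG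
  have hGopen : ∀ ε, IsOpen (G ε) := by
    intro ε
    rw [isOpen_iff_mem_nhds]
    rintro x ⟨U, hU, hxU, hd⟩
    exact mem_of_superset (hU.mem_nhds hxU) fun y hy => ⟨U, hU, hy, hd⟩
  have hGdense : ∀ ε : ℝ, 0 < ε → Dense (G ε) := by
    intro ε hε
    set C : ℕ → Set X := fun N =>
      {x | ∀ k l, N ≤ k → N ≤ l → dist (F k x) (F l x) ≤ ε / 4} with hC
    have hCclosed : ∀ N, IsClosed (C N) := by
      intro N
      have : C N = ⋂ (k) (l) (_ : N ≤ k) (_ : N ≤ l),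
          {x | dist (F k x) (F l x) ≤ ε / 4} := by
        ext x; simp [hC]
      rw [this]
      exact isClosed_iInter fun k => isClosed_iInter fun l => isClosed_iInter fun _ =>
        isClosed_iInter fun _ => isClosed_le ((hF k).dist (hF l)) continuous_const
    have hCcover : ⋃ N, C N = univ := by
      ext x
      simp only [mem_iUnion, mem_univ, iff_true]
      obtain ⟨N, hN⟩ := Metric.tendsto_atTop.1 (hlim x) (ε / 8) (by linarith)
      refine ⟨N, fun k l hk hl => ?_⟩
      calc dist (F k x) (F l x) ≤ dist (F k x) (f x) + dist (F l x) (f x) :=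
            dist_triangle_right _ _ _
        _ ≤ ε / 8 + ε / 8 := add_le_add (hN k hk).le (hN l hl).le
        _ ≤ ε / 4 := by linarith
    refine (dense_iUnion_interior_of_closed hCclosed hCcover).mono ?_
    rintro x hx
    obtain ⟨N, hxs⟩ := mem_iUnion.1 hx
    have hfd : ∀ y ∈ C N, dist (F N y) (f y) ≤ ε / 4 := by
      intro y hy
      refine le_of_tendsto (tendsto_const_nhds.dist (hlim y)) ?_
      exact eventually_atTop.2 ⟨N, fun l hl => hy N l le_rfl hl⟩
    set V : Set X := interior (C N) ∩ (fun y => dist (F N y) (F N x)) ⁻¹' Iio (ε / 4) with hV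
    have hVopen : IsOpen V :=
      isOpen_interior.inter (isOpen_Iio.preimage ((hF N).dist continuous_const))
    have hxV : x ∈ V := ⟨hxs, by simp [hε]⟩
    refine ⟨V, hVopen, hxV, fun y hy z hz => ?_⟩
    have hyC := interior_subset hy.1
    have hzC := interior_subset hz.1
    calc dist (f y) (f z)
        ≤ dist (f y) (F N y) + dist (F N y) (F N z) + dist (F N z) (f z) :=
          dist_triangle4 _ _ _ _
      _ ≤ dist (f y) (F N y) + (dist (F N y) (F N x) + dist (F N x) (F N z))
            + dist (F N z) (f z) := by
          gcongr; exact dist_triangle _ _ _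
      _ ≤ ε / 4 + (ε / 4 + ε / 4) + ε / 4 := by
          have h1 := hfd y hyC
          have h2 := hfd z hzC
          have h3 : dist (F N y) (F N x) ≤ ε / 4 := le_of_lt hy.2
          have h4 : dist (F N x) (F N z) ≤ ε / 4 := by
            rw [dist_comm]; exact le_of_lt hz.2
          rw [dist_comm (F N y) (f y)] at h1
          gcongr
      _ = ε := by ring
  have hdense : Dense (⋂ m : ℕ, G ((m + 1 : ℝ)⁻¹)) :=
    dense_iInter_of_isOpen (fun m => hGopen _) (fun m => hGdense _ (by positivity))
  obtain ⟨x, hx⟩ := hdense.nonempty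
  refine ⟨x, ?_⟩
  rw [ContinuousAt, Metric.tendsto_nhds]
  intro ε hε
  obtain ⟨m, hm⟩ := exists_nat_gt ε⁻¹
  obtain ⟨U, hUo, hxU, hd⟩ := mem_iInter.1 hx m
  filter_upwards [hUo.mem_nhds hxU] with y hy
  have hle : dist (f y) (f x) ≤ (m + 1 : ℝ)⁻¹ := hd y hy x hxU
  have h1 : ε⁻¹ < (m + 1 : ℝ) := hm.trans (by linarith)
  have h2 : (m + 1 : ℝ)⁻¹ < ε := (inv_lt_comm₀ hε (by positivity)).1 h1
  exact lt_of_le_of_lt hle h2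
open Set Filter Topology Uniformity

section Aux

variable {E V : Type*} [AddCommGroup E] [Module ℝ E] [TopologicalSpace E]
    [ContinuousSMul ℝ E] [ContinuousAdd E]
    [AddCommGroup V] [Module ℝ V] [TopologicalSpace V] [IsTopologicalAddGroup V]
    [ContinuousSMul ℝ V] {n : ℕ}

/-- If a multilinear map is continuous at a point, it is continuous at the point obtained by
replacing one coordinate with `0`. -/
theorem MultilinearMap.continuousAt_update_zero (ω : MultilinearMap ℝ (fun _ : Fin n => E) V)
    {a : Fin n → E} (hω : ContinuousAt ω a) (j : Fin n) :
    ContinuousAt ω (Function.update a j 0) := by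
  classical
  have key : ∀ x : Fin n → E,
      ω x = ω (Function.update x j (x j + a j)) - ω (Function.update x j (a j)) := by
    intro x
    rw [ω.map_update_add, Function.update_eq_self]
    abel
  have hφ : Continuous fun x : Fin n → E => Function.update x j (x j + a j) := by
    refine continuous_pi fun i => ?_
    by_cases h : i = j
    · subst h
      simp only [Function.update_self]
      exact (continuous_apply _).add continuous_const
    · simp only [Function.update_of_ne h]
      exact continuous_apply i
  have hψ : Continuous fun x : Fin n → E => Function.update x j (a j) := by
    refine continuous_pi fun i => ?_
    by_cases h : i = j
    · subst h; simp only [Function.update_self]; exact continuous_const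
    · simp only [Function.update_of_ne h]; exact continuous_apply i
  have hφa : Function.update (Function.update a j 0) j ((Function.update a j 0) j + a j) = a := by
    ext i
    by_cases h : i = j
    · subst h; simp
    · simp [Function.update_of_ne h]
  have hψa : Function.update (Function.update a j 0) j (a j) = a := by
    ext i
    by_cases h : i = j
    · subst h; simp
    · simp [Function.update_of_ne h]
  have h1 : ContinuousAt (fun x => ω (Function.update x j (x j + a j)))
      (Function.update a j 0) := by
    refine ContinuousAt.comp ?_ hφ.continuousAt
    rwa [hφa]
  have h2 : ContinuousAt (fun x => ω (Function.update x j (a j)))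
      (Function.update a j 0) := by
    refine ContinuousAt.comp ?_ hψ.continuousAt
    rwa [hψa]
  exact (h1.sub h2).congr (Eventually.of_forall fun x => (key x).symm)

/-- A multilinear map continuous at `0` sends "mixed" piecewise arguments to `0` in the limit:
if `M ≠ univ`, then `h ↦ ω (M.piecewise c h)` tends to `0` as `h → 0`. -/
theorem MultilinearMap.tendsto_piecewise_zero (ω : MultilinearMap ℝ (fun _ : Fin n => E) V)
    (hω : ContinuousAt ω 0) (M : Finset (Fin n)) (hM : M ≠ Finset.univ) (c : Fin n → E) :
    Tendsto (fun h : Fin n → E => ω (M.piecewise c h)) (𝓝 0) (𝓝 0) := by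
  classical
  obtain ⟨j, hj⟩ : ∃ j, j ∉ M := by
    by_contra hcon
    push_neg at hcon
    exact hM (Finset.eq_univ_iff_forall.2 hcon)
  haveI : Nonempty (Fin n) := ⟨j⟩
  refine fun W hW => ?_
  rw [mem_map]
  have h0 : ω 0 = 0 := ω.map_zero
  have hpre : ⇑ω ⁻¹' W ∈ 𝓝 (0 : Fin n → E) := hω (by rw [h0]; exact hW)
  obtain ⟨U, hU, hUW⟩ : ∃ U ∈ 𝓝 (0 : E), ∀ x : Fin n → E, (∀ i, x i ∈ U) → ω x ∈ W := by
    rw [nhds_pi] at hpre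
    obtain ⟨I, hIfin, t, ht, hsub⟩ := Filter.mem_pi.1 hpre
    refine ⟨⋂ i, t i, Filter.iInter_mem.2 ht, fun x hx => hsub fun i _ => ?_⟩
    exact mem_iInter.1 (hx i) i
  have habs : ∀ᶠ τ : ℝ in 𝓝 0, ∀ i, τ • c i ∈ U := by
    rw [eventually_all]
    intro i
    have hten : Tendsto (fun τ : ℝ => τ • c i) (𝓝 0) (𝓝 0) := by
      have : Tendsto (fun τ : ℝ => τ • c i) (𝓝 0) (𝓝 ((0 : ℝ) • c i)) :=
        (continuous_id.smul (continuous_const (y := c i))).tendsto (0 : ℝ)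
      simpa only [zero_smul] using this
    exact hten hU
  obtain ⟨τ, hτ, hτ0⟩ : ∃ τ : ℝ, (∀ i, τ • c i ∈ U) ∧ τ ≠ 0 := by
    have : ∀ᶠ τ : ℝ in 𝓝[≠] 0, (∀ i, τ • c i ∈ U) ∧ τ ≠ 0 := by
      refine (eventually_nhdsWithin_of_eventually_nhds habs).and ?_
      exact eventually_mem_nhdsWithin.mono fun τ h => h
    exact this.exists
  set m := M.card with hm
  have hτm : (τ ^ m) ≠ 0 := pow_ne_zero _ hτ0
  set U' : Set E := U ∩ (fun u : E => (τ ^ m)⁻¹ • u) ⁻¹' U with hU'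
  have hU'mem : U' ∈ 𝓝 (0 : E) := by
    refine inter_mem hU ?_
    have hc : Continuous fun u : E => (τ ^ m)⁻¹ • u := continuous_const_smul _
    have hca := hc.continuousAt (x := (0 : E))
    rw [ContinuousAt, smul_zero] at hca
    exact hca hU
  have hbox : (Set.univ : Set (Fin n)).pi (fun _ => U') ∈ 𝓝 (0 : Fin n → E) :=
    set_pi_mem_nhds finite_univ fun i _ => hU'mem
  refine mem_of_superset hbox ?_
  intro h hh
  have hhU' : ∀ i, h i ∈ U' := fun i => hh i (mem_univ i)
  simp only [mem_preimage]
  set v₂ := Function.update (M.piecewise (fun i => τ • c i) h) j ((τ ^ m)⁻¹ • h j) with hv₂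
  have e1 : ω (M.piecewise (fun i => τ • c i) h) = (τ ^ m) • ω (M.piecewise c h) := by
    have harg : M.piecewise (fun i => τ • (M.piecewise c h) i) (M.piecewise c h)
        = M.piecewise (fun i => τ • c i) h := by
      ext i
      by_cases hi : i ∈ M
      · simp [Finset.piecewise_eq_of_mem _ _ _ hi]
      · simp [Finset.piecewise_eq_of_notMem _ _ _ hi]
    have hps := ω.map_piecewise_smul (fun _ => τ) (M.piecewise c h) M
    rw [harg] at hps
    rw [hps, Finset.prod_const]
  have ebase : Function.update (M.piecewise (fun i => τ • c i) h) j (h j)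
      = M.piecewise (fun i => τ • c i) h := by
    conv_lhs => rw [show h j = (M.piecewise (fun i => τ • c i) h) j from
      (Finset.piecewise_eq_of_notMem _ _ _ hj).symm]
    exact Function.update_eq_self _ _
  have e2 : ω v₂ = (τ ^ m)⁻¹ • ω (M.piecewise (fun i => τ • c i) h) := by
    rw [hv₂, ω.map_update_smul, ebase]
  have e3 : ω (M.piecewise c h) = ω v₂ := by
    rw [e2, e1, smul_smul, inv_mul_cancel₀ hτm, one_smul]
  rw [e3]
  refine hUW v₂ fun i => ?_
  by_cases hij : i = j
  · subst hij
    rw [hv₂, Function.update_self]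
    exact (hhU' i).2
  · rw [hv₂, Function.update_of_ne hij]
    by_cases hi : i ∈ M
    · rw [Finset.piecewise_eq_of_mem _ _ _ hi]; exact hτ i
    · rw [Finset.piecewise_eq_of_notMem _ _ _ hi]; exact (hhU' i).1

end Aux


/-- **Baire category argument for multilinear maps.**  A pointwise limit of continuous
functions from a Baire space into a metrizable space has a point of continuity.
Consequently, if `𝔤` is a Fréchet space (so `𝔤ⁿ` is a Baire space), `V` a metrizable
locally convex space, and `ω : 𝔤ⁿ → V` an `n`-linear map which is the pointwise limit of
a sequence of continuous maps `Fₖ : 𝔤ⁿ → V`, then `ω` is continuous. -/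
theorem multilinear_pointwise_limit_continuous
    {E V : Type*}
    [AddCommGroup E] [Module ℝ E] [UniformSpace E] [IsUniformAddGroup E]
    [ContinuousSMul ℝ E] [CompleteSpace E] [LocallyConvexSpace ℝ E]
    [TopologicalSpace.MetrizableSpace E]
    [AddCommGroup V] [Module ℝ V] [TopologicalSpace V] [IsTopologicalAddGroup V]
    [ContinuousSMul ℝ V] [LocallyConvexSpace ℝ V] [TopologicalSpace.MetrizableSpace V]
    [T2Space V]
    {n : ℕ} (ω : MultilinearMap ℝ (fun _ : Fin n => E) V)
    (F : ℕ → (Fin n → E) → V) (hF : ∀ k, Continuous (F k))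
    (hlim : ∀ x : Fin n → E, Tendsto (fun k => F k x) atTop (𝓝 (ω x))) :
    Continuous ω := by
  classical
  haveI : Nonempty (Fin n → E) := ⟨0⟩
  haveI : (𝓤 E).IsCountablyGenerated := IsUniformAddGroup.uniformity_countably_generated
  haveI hB : BaireSpace (Fin n → E) := BaireSpace.of_completelyPseudoMetrizable
  obtain ⟨a, ha⟩ :=
    letI : MetricSpace V := TopologicalSpace.metrizableSpaceMetric V
    osgood_exists_continuousAt (⇑ω) F hF hlim
  -- move the continuity point to `0`
  have hstep : ∀ s : Finset (Fin n),
      ContinuousAt ω (fun i => if i ∈ s then (0 : E) else a i) := by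
    intro s
    induction s using Finset.induction_on with
    | empty => simpa using ha
    | @insert j s hj ih =>
      have hpt : (fun i => if i ∈ insert j s then (0 : E) else a i)
          = Function.update (fun i => if i ∈ s then (0 : E) else a i) j 0 := by
        ext i
        by_cases hij : i = j
        · subst hij; simp
        · simp [Function.update_of_ne hij, Finset.mem_insert, hij]
      rw [hpt]
      exact ω.continuousAt_update_zero ih j
  have h0 : ContinuousAt ω (0 : Fin n → E) := by
    have h := hstep Finset.univ
    have heq : (fun i : Fin n => if i ∈ Finset.univ then (0 : E) else a i) = 0 := by
      ext i; simp
    rwa [heq] at h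
  -- continuity everywhere
  rw [continuous_iff_continuousAt]
  intro b
  have hmap : Filter.map (fun h : Fin n → E => b + h) (𝓝 0) = 𝓝 b := by
    simpa using (Homeomorph.addLeft b).map_nhds_eq 0
  rw [ContinuousAt, ← hmap, tendsto_map'_iff]
  have hsum : Tendsto (fun h : Fin n → E => ∑ S : Finset (Fin n), ω (S.piecewise b h)) (𝓝 0)
      (𝓝 (∑ S : Finset (Fin n), if S = Finset.univ then ω b else 0)) := by
    refine tendsto_finset_sum _ fun S _ => ?_
    by_cases hS : S = Finset.univ
    · subst hS
      have hconst : ∀ h : Fin n → E, (Finset.univ : Finset (Fin n)).piecewise b h = b := by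
        intro h; ext i; simp
      simp only [hconst, if_pos rfl]
      exact tendsto_const_nhds
    · simpa [hS] using ω.tendsto_piecewise_zero h0 S hS b
  have hval : (∑ S : Finset (Fin n), if S = Finset.univ then ω b else 0) = ω b := by simp
  rw [hval] at hsum
  exact hsum.congr fun h => (ω.map_add_univ b h).symm
end
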